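/- arXiv:1409.5348 — 2 statements merged into one kernel-verified Lean document; each statement's English description precedes it below -/
import Mathlib

section
/- Let N ≥ 2 be an integer, R > 0, and let f satisfy (A1) and (A3) with δ = 0. Fix k ∈ ℕ and λ̂ > 0. For n ∈ ℕ define g_n : [0,R] × (−α,α) → ℝ by g_n(r,s) = 0 for r ∈ [0, 1/n] and g_n(r,s) = f(r − 1/n, s) for r ∈ (1/n, R]. Then there exists b̂ > 0, independent of n, such that every function u ∈ C¹([0,R]), with r ↦ r^{N−1}u'(r) continuously differentiable, satisfying −(r^{N−1}u')' + (N−1) r^{N−2}(u')³ = λ̂ r^{N−1} g_n(r,u) h(u') on (0,R), u'(0) = u(R) = 0, and belonging to S_{k,0}, satisfies sup_{r∈[0,R]} |u(r)| ≥ b̂. -/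
open Set Filter Topology

/-- `φ₁(s) = s / √(1 - s²)`. -/
noncomputable def phi1 (s : ℝ) : ℝ := s / Real.sqrt (1 - s ^ 2)

/-- Condition (A1): `f : [0,R] × (-α,α) → ℝ` is continuous, `R < α ≤ ∞`, and
`f(r,s) s > 0` for `r ∈ [0,R]` and `0 < |s| < α`. -/
def CondA1 (R : ℝ) (α : EReal) (f : ℝ → ℝ → ℝ) : Prop :=
  (R : EReal) < α ∧
  ContinuousOn (fun p : ℝ × ℝ => f p.1 p.2)
    {p : ℝ × ℝ | p.1 ∈ Icc 0 R ∧ ((|p.2| : ℝ) : EReal) < α} ∧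
  ∀ r ∈ Icc 0 R, ∀ s : ℝ, ((|s| : ℝ) : EReal) < α → s ≠ 0 → 0 < f r s * s

/-- Condition (A2): `f(r,s)/s → m(r)` as `s → 0`, uniformly in `r ∈ [δ,R]`, with
`m` continuous, nonnegative, and not identically zero on any nondegenerate
subinterval of `[δ,R]`. -/
def CondA2 (δ R : ℝ) (f : ℝ → ℝ → ℝ) (m : ℝ → ℝ) : Prop :=
  ContinuousOn m (Icc δ R) ∧
  (∀ r ∈ Icc δ R, 0 ≤ m r) ∧
  (∀ a b : ℝ, δ ≤ a → a < b → b ≤ R → ∃ r ∈ Icc a b, m r ≠ 0) ∧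
  ∀ ε : ℝ, 0 < ε → ∃ η : ℝ, 0 < η ∧
    ∀ r ∈ Icc δ R, ∀ s : ℝ, s ≠ 0 → |s| < η → |f r s / s - m r| < ε

/-- Condition (A3): `f(r,0) = 0` and `f(r,s)/φ₁(s) → ∞` as `s → 0`, uniformly in
`r ∈ [δ,R]`. -/
def CondA3 (δ R : ℝ) (f : ℝ → ℝ → ℝ) : Prop :=
  (∀ r ∈ Icc δ R, f r 0 = 0) ∧
  ∀ M : ℝ, ∃ η : ℝ, 0 < η ∧
    ∀ r ∈ Icc δ R, ∀ s : ℝ, s ≠ 0 → |s| < η → M < f r s / phi1 s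

/-- Condition (A4): `F(r,s) = ∫₀^s f(r,x) dx` is differentiable in `r ∈ [δ,R]` and
`|∂F/∂r(r,s)| ≤ ω(r) F(r,s)` for a continuous nonnegative `ω`. -/
def CondA4 (δ R : ℝ) (α : EReal) (f : ℝ → ℝ → ℝ) : Prop :=
  ∃ Fr : ℝ → ℝ → ℝ, ∃ ω : ℝ → ℝ,
    ContinuousOn ω (Icc δ R) ∧ (∀ r ∈ Icc δ R, 0 ≤ ω r) ∧
    ∀ s : ℝ, ((|s| : ℝ) : EReal) < α →
      (∀ r ∈ Icc δ R,
        HasDerivWithinAt (fun t => ∫ x in (0:ℝ)..s, f t x) (Fr r s) (Icc δ R) r) ∧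
      (∀ r ∈ Icc δ R, |Fr r s| ≤ ω r * ∫ x in (0:ℝ)..s, f r x)

/-- `u` (with derivative `u'`) is a solution of problem `(P)_{δ,λ}`:
`u ∈ C¹([δ,R])`, `|u'| < 1`, `r ↦ r^{N-1} φ₁(u'(r))` is continuously
differentiable, `(r^{N-1} φ₁(u'))' + λ r^{N-1} f(r,u) = 0` on `(δ,R)`, and
`u'(δ) = 0 = u(R)`. -/
def IsSolP (N : ℕ) (δ R lam : ℝ) (f : ℝ → ℝ → ℝ) (u u' : ℝ → ℝ) : Prop :=
  (∀ r ∈ Icc δ R, HasDerivWithinAt u (u' r) (Icc δ R) r) ∧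
  ContinuousOn u' (Icc δ R) ∧
  (∀ r ∈ Icc δ R, |u' r| < 1) ∧
  (∃ w' : ℝ → ℝ, ContinuousOn w' (Icc δ R) ∧
    (∀ r ∈ Icc δ R,
      HasDerivWithinAt (fun t => t ^ (N - 1) * phi1 (u' t)) (w' r) (Icc δ R) r) ∧
    ∀ r ∈ Ioo δ R, w' r + lam * r ^ (N - 1) * f r (u r) = 0) ∧
  u' δ = 0 ∧ u R = 0

/-- `u ∈ S^ν_{k,δ}`: `u'(δ) = u(R) = 0`, `u` has exactly `k-1` zeros in `(δ,R)`,
all simple (`u' ≠ 0` there), and `ν u > 0` on some interval `(δ, δ+σ)`. -/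
def InS (δ R : ℝ) (k : ℕ) (ν : ℝ) (u u' : ℝ → ℝ) : Prop :=
  u' δ = 0 ∧ u R = 0 ∧
  (∃ Z : Finset ℝ, Z.card = k - 1 ∧
    (∀ r : ℝ, r ∈ Z ↔ r ∈ Ioo δ R ∧ u r = 0) ∧
    ∀ r ∈ Z, u' r ≠ 0) ∧
  ∃ σ : ℝ, 0 < σ ∧ ∀ r ∈ Ioo δ (δ + σ), 0 < ν * u r

/-- `w` (with derivative `w'`) is a solution of the linear problem
`-(r^{N-1} w')' = λ r^{N-1} m(r) w` on `(δ,R)` with `w'(δ) = w(R) = 0`. -/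
def IsLinSol (N : ℕ) (δ R lam : ℝ) (m : ℝ → ℝ) (w w' : ℝ → ℝ) : Prop :=
  (∀ r ∈ Icc δ R, HasDerivWithinAt w (w' r) (Icc δ R) r) ∧
  ContinuousOn w' (Icc δ R) ∧
  (∃ g : ℝ → ℝ, ContinuousOn g (Icc δ R) ∧
    (∀ r ∈ Icc δ R,
      HasDerivWithinAt (fun t => t ^ (N - 1) * w' t) (g r) (Icc δ R) r) ∧
    ∀ r ∈ Ioo δ R, -g r = lam * r ^ (N - 1) * m r * w r) ∧
  w' δ = 0 ∧ w R = 0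

/-- `lam` is the `k`-th eigenvalue of the linear problem: it is positive and the
problem admits a nontrivial solution having exactly `k-1` simple zeros in
`(δ,R)`. -/
def IsKthEigen (N : ℕ) (δ R : ℝ) (m : ℝ → ℝ) (k : ℕ) (lam : ℝ) : Prop :=
  0 < lam ∧
  ∃ w w' : ℝ → ℝ, IsLinSol N δ R lam m w w' ∧ (∃ r ∈ Icc δ R, w r ≠ 0) ∧
    ∃ Z : Finset ℝ, Z.card = k - 1 ∧
      (∀ r : ℝ, r ∈ Z ↔ r ∈ Ioo δ R ∧ w r = 0) ∧
      ∀ r ∈ Z, w' r ≠ 0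

/-- The function `h(y) = (1-y²)^{3/2}` for `|y| ≤ 1`, `h(y) = 0` otherwise. -/
noncomputable def hcap (y : ℝ) : ℝ := if |y| ≤ 1 then (1 - y ^ 2) ^ ((3 : ℝ) / 2) else 0

/-- `φ₁⁻¹(y) = y / √(1 + y²)`, the inverse of `φ₁`. -/
noncomputable def phi1inv (y : ℝ) : ℝ := y / Real.sqrt (1 + y ^ 2)

/-- `Σ_δ`: the closure, in `ℝ × C¹([δ,R])` (realized as `ℝ × (C([δ,R]) × C([δ,R]))`
via `u ↦ (u, u')`), of the set of pairs `(λ, u)` with `λ ≥ 0` and `u` a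
nontrivial solution of `(P)_{δ,λ}`. -/
noncomputable def SigmaSet (N : ℕ) (δ R : ℝ) (f : ℝ → ℝ → ℝ) :
    Set (ℝ × (ContinuousMap (Icc δ R) ℝ × ContinuousMap (Icc δ R) ℝ)) :=
  closure {p | 0 ≤ p.1 ∧ ∃ u u' : ℝ → ℝ,
    IsSolP N δ R p.1 f u u' ∧
    (∀ x : Icc δ R, p.2.1 x = u x ∧ p.2.2 x = u' x) ∧
    ∃ r ∈ Icc δ R, u r ≠ 0}

lemma st15_sq_le {s : ℝ} (h : |s| ≤ 1/2) : s^2 ≤ 1/4 := by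
  nlinarith [sq_abs s, abs_nonneg s]

lemma st15_one_sub_pos {s : ℝ} (h : |s| ≤ 1/2) : (0:ℝ) < 1 - s^2 := by
  nlinarith [st15_sq_le h]

lemma st15_sqrt_pos {s : ℝ} (h : |s| ≤ 1/2) : 0 < Real.sqrt (1 - s^2) :=
  Real.sqrt_pos.2 (st15_one_sub_pos h)

lemma st15_sqrt_ge {s : ℝ} (h : |s| ≤ 1/2) : 1/2 ≤ Real.sqrt (1 - s^2) := by
  have h1 : ((1:ℝ)/2) = Real.sqrt ((1/2)^2) := (Real.sqrt_sq (by norm_num)).symm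
  rw [h1]
  exact Real.sqrt_le_sqrt (by nlinarith [st15_sq_le h])

lemma st15_sqrt_le_one {s : ℝ} : Real.sqrt (1 - s^2) ≤ 1 := by
  have : Real.sqrt (1 - s^2) ≤ Real.sqrt 1 := Real.sqrt_le_sqrt (by nlinarith [sq_nonneg s])
  simpa using this

lemma st15_phi1_mul {s : ℝ} (h : |s| ≤ 1/2) : phi1 s * Real.sqrt (1 - s^2) = s :=
  div_mul_cancel₀ _ (ne_of_gt (st15_sqrt_pos h))

lemma st15_phi1_pos {s : ℝ} (h : |s| ≤ 1/2) (hs : 0 < s) : 0 < phi1 s :=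
  div_pos hs (st15_sqrt_pos h)

lemma st15_phi1_neg' {s : ℝ} (h : |s| ≤ 1/2) (hs : s < 0) : phi1 s < 0 :=
  div_neg_of_neg_of_pos hs (st15_sqrt_pos h)

lemma st15_phi1_odd (s : ℝ) : phi1 (-s) = - phi1 s := by
  unfold phi1; rw [neg_pow]; ring_nf

lemma st15_le_of_phi1_le {s D : ℝ} (h : |s| ≤ 1/2) (hD : 0 ≤ D) (hp : phi1 s ≤ -D) :
    s ≤ -(D/2) := by
  have h1 := st15_phi1_mul h
  have h2 := st15_sqrt_ge h
  have h3 := st15_sqrt_le_one (s := s)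
  nlinarith [st15_sqrt_pos h]

lemma st15_ge_of_phi1_ge {s D : ℝ} (h : |s| ≤ 1/2) (hD : 0 ≤ D) (hp : D ≤ phi1 s) :
    D/2 ≤ s := by
  have h1 := st15_phi1_mul h
  have h2 := st15_sqrt_ge h
  have h3 := st15_sqrt_le_one (s := s)
  nlinarith [st15_sqrt_pos h]

lemma st15_nonpos_of_phi1 {s : ℝ} (h : |s| ≤ 1/2) (hp : phi1 s ≤ 0) : s ≤ 0 := by
  rw [← st15_phi1_mul h]
  exact mul_nonpos_of_nonpos_of_nonneg hp (Real.sqrt_nonneg _)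

lemma st15_nonneg_of_phi1 {s : ℝ} (h : |s| ≤ 1/2) (hp : 0 ≤ phi1 s) : 0 ≤ s := by
  rw [← st15_phi1_mul h]
  exact mul_nonneg hp (Real.sqrt_nonneg _)

lemma st15_self_le_phi1 {s : ℝ} (h : |s| ≤ 1/2) (hs : 0 ≤ s) : s ≤ phi1 s := by
  have h1 := st15_phi1_mul h
  have h3 := st15_sqrt_le_one (s := s)
  nlinarith [st15_sqrt_pos h, st15_phi1_pos h, le_of_eq h1]

lemma st15_phi1_le_self {s : ℝ} (h : |s| ≤ 1/2) (hs : s ≤ 0) : phi1 s ≤ s := by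
  have h1 := st15_phi1_mul h
  have h3 := st15_sqrt_le_one (s := s)
  have h4 := st15_sqrt_pos h
  nlinarith

lemma st15_phi1_abs (s : ℝ) : |phi1 s| = |s| / Real.sqrt (1 - s^2) := by
  unfold phi1; rw [abs_div, abs_of_nonneg (Real.sqrt_nonneg _)]

lemma st15_hcap_cube {s : ℝ} (h : |s| ≤ 1) : hcap s = Real.sqrt (1 - s^2) ^ 3 := by
  unfold hcap
  rw [if_pos h]
  have h0 : (0:ℝ) ≤ 1 - s^2 := by nlinarith [sq_abs s, abs_nonneg s]
  rw [Real.sqrt_eq_rpow, ← Real.rpow_natCast ((1-s^2) ^ ((1:ℝ)/2)) 3, ← Real.rpow_mul h0]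
  norm_num

lemma st15_mono {F F' : ℝ → ℝ} {a b : ℝ}
    (hcont : ContinuousOn F (Icc a b))
    (hd : ∀ r ∈ Ioo a b, HasDerivAt F (F' r) r)
    (h0 : ∀ r ∈ Ioo a b, 0 ≤ F' r) : MonotoneOn F (Icc a b) := by
  apply monotoneOn_of_deriv_nonneg (convex_Icc a b) hcont
  · intro x hx; rw [interior_Icc] at hx
    exact (hd x hx).differentiableAt.differentiableWithinAt
  · intro x hx; rw [interior_Icc] at hx
    rw [(hd x hx).deriv]; exact h0 x hx

lemma st15_anti {F F' : ℝ → ℝ} {a b : ℝ}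
    (hcont : ContinuousOn F (Icc a b))
    (hd : ∀ r ∈ Ioo a b, HasDerivAt F (F' r) r)
    (h0 : ∀ r ∈ Ioo a b, F' r ≤ 0) : AntitoneOn F (Icc a b) := by
  apply antitoneOn_of_deriv_nonpos (convex_Icc a b) hcont
  · intro x hx; rw [interior_Icc] at hx
    exact (hd x hx).differentiableAt.differentiableWithinAt
  · intro x hx; rw [interior_Icc] at hx
    rw [(hd x hx).deriv]; exact h0 x hx

lemma st15_small (R : ℝ) (hR : 0 < R) (α : EReal) (f : ℝ → ℝ → ℝ)
    (hcont : ContinuousOn (fun p : ℝ × ℝ => f p.1 p.2)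
      {p : ℝ × ℝ | p.1 ∈ Icc 0 R ∧ ((|p.2| : ℝ) : EReal) < α})
    (hα : (R : EReal) < α)
    (hf0 : ∀ r ∈ Icc (0:ℝ) R, f r 0 = 0)
    (ε : ℝ) (hε : 0 < ε) :
    ∃ b : ℝ, 0 < b ∧ ∀ r ∈ Icc (0:ℝ) R, ∀ s : ℝ, |s| ≤ b → |f r s| ≤ ε := by
  by_contra hcon
  push_neg at hcon
  have hc : ∀ j : ℕ, ∃ r ∈ Icc (0:ℝ) R, ∃ s : ℝ,
      |s| ≤ min (1/((j:ℝ)+1)) (R/2) ∧ ε < |f r s| := by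
    intro j
    apply hcon
    have : (0:ℝ) < 1/((j:ℝ)+1) := by positivity
    exact lt_min this (by linarith)
  choose r hrI sq hsq hbig using hc
  -- extract convergent subsequence of r
  obtain ⟨rb, hrbI, φ, hφ, hconv⟩ := isCompact_Icc.tendsto_subseq hrI
  have hsq0 : Tendsto (fun j => sq (φ j)) atTop (𝓝 0) := by
    have h2 : Tendsto (fun j : ℕ => 1/(((φ j):ℝ)+1)) atTop (𝓝 0) := by
      have h3 : Tendsto (fun j : ℕ => 1/((j:ℝ)+1)) atTop (𝓝 0) :=
        tendsto_one_div_add_atTop_nhds_zero_nat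
      exact h3.comp hφ.tendsto_atTop
    refine squeeze_zero_norm (fun j => ?_) h2
    simpa [Real.norm_eq_abs] using le_trans (hsq (φ j)) (min_le_left _ _)
  set S : Set (ℝ × ℝ) := {p : ℝ × ℝ | p.1 ∈ Icc 0 R ∧ ((|p.2| : ℝ) : EReal) < α} with hS
  have hmemS : ∀ j : ℕ, ((r (φ j)), (sq (φ j))) ∈ S := by
    intro j
    refine ⟨hrI (φ j), ?_⟩
    have h3 : |sq (φ j)| ≤ R/2 := le_trans (hsq (φ j)) (min_le_right _ _)
    calc ((|sq (φ j)| : ℝ) : EReal) ≤ ((R/2 : ℝ) : EReal) := by exact_mod_cast h3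
    _ < ((R:ℝ) : EReal) := by exact_mod_cast (by linarith : R/2 < R)
    _ < α := hα
  have hb0 : ((rb, (0:ℝ)) : ℝ × ℝ) ∈ S := by
    refine ⟨hrbI, ?_⟩
    have : ((|(0:ℝ)| : ℝ) : EReal) = ((0:ℝ) : EReal) := by norm_num
    rw [this]
    calc ((0:ℝ) : EReal) < ((R:ℝ) : EReal) := by exact_mod_cast hR
    _ < α := hα
  have htend : Tendsto (fun j => ((r (φ j)), (sq (φ j)))) atTop (𝓝[S] (rb, 0)) := by
    rw [tendsto_nhdsWithin_iff]
    exact ⟨hconv.prodMk_nhds hsq0, Eventually.of_forall hmemS⟩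
  have hcw : ContinuousWithinAt (fun p : ℝ × ℝ => f p.1 p.2) S (rb, 0) := hcont _ hb0
  have hlim : Tendsto (fun j => f (r (φ j)) (sq (φ j))) atTop (𝓝 (f rb 0)) :=
    hcw.tendsto.comp htend
  rw [hf0 rb hrbI] at hlim
  have habs : Tendsto (fun j => |f (r (φ j)) (sq (φ j))|) atTop (𝓝 0) := by
    simpa using hlim.abs
  have hev := habs.eventually (eventually_lt_nhds hε)  -- |..| < ε eventually
  rcases hev.exists with ⟨j, hj⟩
  exact absurd (hbig (φ j)) (not_lt.2 (le_of_lt hj))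

set_option maxHeartbeats 1000000 in
lemma st15_yderiv (K : ℕ) (R lam : ℝ) (u u' g fe : ℝ → ℝ)
    (hw : ∀ r ∈ Icc (0:ℝ) R, HasDerivWithinAt (fun t => t ^ (K+1) * u' t) (g r) (Icc (0:ℝ) R) r)
    (heq : ∀ r ∈ Ioo (0:ℝ) R, -g r + ((K:ℝ)+1) * r ^ K * (u' r)^3
        = lam * r^(K+1) * fe r * hcap (u' r))
    {r₀ : ℝ} (hr₀ : r₀ ∈ Ioo (0:ℝ) R) (hs : |u' r₀| < 1) :
    HasDerivWithinAt (fun r => r^(K+1) * phi1 (u' r)) (-(lam * r₀^(K+1) * fe r₀))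
      (Icc (0:ℝ) R) r₀ := by
  have hr0 : 0 < r₀ := hr₀.1
  have hr0R : r₀ ∈ Icc (0:ℝ) R := ⟨le_of_lt hr0, le_of_lt hr₀.2⟩
  set s := u' r₀ with hsdef
  have h1 : 0 < 1 - s^2 := by nlinarith [sq_abs s, abs_nonneg s]
  set w : ℝ → ℝ := fun t => t ^ (K+1) * u' t with hwdef
  set P : ℝ → ℝ := fun r => (r^(K+1))^2 - (w r)^2 with hPdef
  have hA : 0 < r₀^(K+1) := pow_pos hr0 _
  have hPpos : 0 < P r₀ := by
    have : P r₀ = (r₀^(K+1))^2 * (1 - s^2) := by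
      simp only [hPdef, hwdef]; ring
    rw [this]; positivity
  set T := Real.sqrt (1 - s^2) with hTdef
  have hT : 0 < T := Real.sqrt_pos.2 h1
  have hT2 : T^2 = 1 - s^2 := Real.sq_sqrt (le_of_lt h1)
  have hsqrtP : Real.sqrt (P r₀) = r₀^(K+1) * T := by
    have h2 : P r₀ = (r₀^(K+1))^2 * (1 - s^2) := by simp only [hPdef, hwdef]; ring
    rw [h2, Real.sqrt_mul (sq_nonneg _), Real.sqrt_sq (le_of_lt hA), hTdef]
  have hSpos : 0 < Real.sqrt (P r₀) := by rw [hsqrtP]; positivity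
  -- derivative of P
  have hwD := hw r₀ hr0R
  have hP : HasDerivWithinAt P
      (2 * (r₀^(K+1))^1 * (((K:ℝ)+1) * r₀^K) - 2 * (w r₀)^1 * g r₀) (Icc (0:ℝ) R) r₀ := by
    apply HasDerivWithinAt.sub
    · have h3 := ((hasDerivAt_pow (K+1) r₀).hasDerivWithinAt (s := Icc (0:ℝ) R)).pow 2
      simpa [Pi.pow_def] using h3
    · exact hwD.pow 2
  -- derivative of sqrt ∘ P
  have hS : HasDerivWithinAt (fun r => Real.sqrt (P r))
      (1 / (2 * Real.sqrt (P r₀)) * (2 * (r₀^(K+1))^1 * (((K:ℝ)+1) * r₀^K) - 2 * (w r₀)^1 * g r₀))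
      (Icc (0:ℝ) R) r₀ :=
    (Real.hasDerivAt_sqrt (ne_of_gt hPpos)).comp_hasDerivWithinAt r₀ hP
  -- derivative of numerator
  have hNum : HasDerivWithinAt (fun r => w r * r^(K+1))
      (g r₀ * r₀^(K+1) + w r₀ * (((K:ℝ)+1) * r₀^K)) (Icc (0:ℝ) R) r₀ := by
    have h4 := hwD.mul ((hasDerivAt_pow (K+1) r₀).hasDerivWithinAt (s := Icc (0:ℝ) R))
    simp at h4; exact h4
  have hQ := hNum.div hS (ne_of_gt hSpos)
  have hcongr : ∀ x ∈ Icc (0:ℝ) R,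
      x^(K+1) * phi1 (u' x) = w x * x^(K+1) / Real.sqrt (P x) := by
    intro x hx
    have hx0 : 0 ≤ x := hx.1
    have hPx : P x = (x^(K+1))^2 * (1 - (u' x)^2) := by simp only [hPdef, hwdef]; ring
    rw [hPx, Real.sqrt_mul (sq_nonneg _), Real.sqrt_sq (pow_nonneg hx0 _)]
    simp only [hwdef, phi1]
    rcases eq_or_ne (Real.sqrt (1 - u' x ^ 2)) 0 with h0 | h0
    · rw [h0]; simp
    · have hxpow : (0:ℝ) ≤ x^(K+1) := pow_nonneg hx0 _
      rcases eq_or_lt_of_le hxpow with h5 | h5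
      · rw [← h5]; simp
      · field_simp
  have hfinal := (hQ.congr hcongr (hcongr r₀ hr0R))
  -- now identify the derivative value
  have hgval : g r₀ = ((K:ℝ)+1) * r₀^K * s^3 - lam * r₀^(K+1) * fe r₀ * T^3 := by
    have h6 := heq r₀ hr₀
    rw [st15_hcap_cube (le_of_lt hs)] at h6
    rw [hTdef, hsdef]
    linarith [h6]
  have hwr₀ : w r₀ = r₀^(K+1) * s := by simp only [hwdef, hsdef]
  have hval : (g r₀ * r₀^(K+1) + w r₀ * (((K:ℝ)+1) * r₀^K)) * Real.sqrt (P r₀)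
      - w r₀ * r₀^(K+1) *
        (1 / (2 * Real.sqrt (P r₀)) * (2 * (r₀^(K+1))^1 * (((K:ℝ)+1) * r₀^K) - 2 * (w r₀)^1 * g r₀))
      = (-(lam * r₀^(K+1) * fe r₀)) * (Real.sqrt (P r₀))^2 := by
    rw [hsqrtP, hwr₀, hgval]
    have hTne : T ≠ 0 := ne_of_gt hT
    have hAne : r₀^(K+1) ≠ 0 := ne_of_gt hA
    field_simp
    linear_combination (((K:ℝ)+1)*r₀^K*s^3 - lam*r₀^(K+1)*fe r₀*T^3 + s*(((K:ℝ)+1)*r₀^K)) * hT2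
  have hval2 : (g r₀ * r₀^(K+1) + w r₀ * (((K:ℝ)+1) * r₀^K)) * Real.sqrt (P r₀)
      - w r₀ * r₀^(K+1) *
        (1 / (2 * Real.sqrt (P r₀)) * (2 * (r₀^(K+1))^1 * (((K:ℝ)+1) * r₀^K) - 2 * (w r₀)^1 * g r₀)) 
      = (-(lam * r₀^(K+1) * fe r₀)) * (Real.sqrt (P r₀))^2 := hval
  have : ((g r₀ * r₀^(K+1) + w r₀ * (((K:ℝ)+1) * r₀^K)) * Real.sqrt (P r₀)
      - w r₀ * r₀^(K+1) *
        (1 / (2 * Real.sqrt (P r₀)) * (2 * (r₀^(K+1))^1 * (((K:ℝ)+1) * r₀^K) - 2 * (w r₀)^1 * g r₀)))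
      / (Real.sqrt (P r₀))^2 = -(lam * r₀^(K+1) * fe r₀) := by
    rw [hval2]
    field_simp
  rw [this] at hfinal
  exact hfinal

set_option maxHeartbeats 1000000 in
lemma st15_segKey (K : ℕ) (B C a' c : ℝ) (u u' y yd : ℝ → ℝ)
    (hac : a' < c) (hB : 0 < B) (hCB : 32 * B < C * (c - a') ^ 2)
    (hW : ∀ r ∈ Icc a' c, 0 < r ^ (K + 1) ∧ r ^ (K + 1) ≤ B)
    (hyeq : ∀ r ∈ Icc a' c, y r = r ^ (K + 1) * phi1 (u' r))
    (hu : ∀ r ∈ Icc a' c, HasDerivWithinAt u (u' r) (Icc a' c) r)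
    (hy : ∀ r ∈ Icc a' c, HasDerivWithinAt y (yd r) (Icc a' c) r)
    (hyd0 : ∀ r ∈ Ioo a' c, yd r ≤ 0)
    (hydC : ∀ r ∈ Ioo a' c, yd r ≤ -(C * u r))
    (hslope : ∀ r ∈ Icc a' c, |u' r| ≤ 1 / 2)
    (hupos : ∀ r ∈ Icc a' c, 0 < u r) : False := by
  have hl : 0 < c - a' := by linarith
  have hC : 0 < C := by nlinarith
  -- interior derivative upgrade
  have hdy : ∀ r ∈ Ioo a' c, HasDerivAt y (yd r) r := fun r hr =>
    (hy r (Ioo_subset_Icc_self hr)).hasDerivAt (Icc_mem_nhds hr.1 hr.2)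
  have hdu : ∀ r ∈ Ioo a' c, HasDerivAt u (u' r) r := fun r hr =>
    (hu r (Ioo_subset_Icc_self hr)).hasDerivAt (Icc_mem_nhds hr.1 hr.2)
  have hycont : ContinuousOn y (Icc a' c) := fun r hr => (hy r hr).continuousWithinAt
  have hucont : ContinuousOn u (Icc a' c) := fun r hr => (hu r hr).continuousWithinAt
  set s₁ := a' + (c - a')/4 with hs₁
  set r₂ := a' + (c - a')/2 with hr₂
  set m₃ := a' + 3*(c - a')/4 with hm₃
  have hms : a' < s₁ ∧ s₁ < r₂ ∧ r₂ < m₃ ∧ m₃ < c := by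
    refine ⟨by rw [hs₁]; linarith, by rw [hs₁, hr₂]; linarith,
      by rw [hr₂, hm₃]; linarith, by rw [hm₃]; linarith⟩
  obtain ⟨h1, h2, h3, h4⟩ := hms
  have hmr : m₃ - r₂ = (c - a')/4 := by rw [hm₃, hr₂]; ring
  have hcm : c - m₃ = (c - a')/4 := by rw [hm₃]; ring
  have hsr : r₂ - s₁ = (c - a')/4 := by rw [hr₂, hs₁]; ring
  have hsa : s₁ - a' = (c - a')/4 := by rw [hs₁]; ring
  clear_value s₁ r₂ m₃
  clear hs₁ hr₂ hm₃
  have hphi : ∀ r ∈ Icc a' c, phi1 (u' r) = y r / r ^ (K+1) := by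
    intro r hr
    rw [hyeq r hr]
    field_simp [ne_of_gt (hW r hr).1]
  rcases le_or_gt (y r₂) 0 with hc1 | hc2
  · -- decreasing case on [r₂, c]
    have hsub : Icc r₂ c ⊆ Icc a' c := Icc_subset_Icc (by linarith) le_rfl
    have hsubo : Ioo r₂ c ⊆ Ioo a' c := Ioo_subset_Ioo (by linarith) le_rfl
    have hyanti : AntitoneOn y (Icc r₂ c) :=
      st15_anti (hycont.mono hsub) (fun r hr => hdy r (hsubo hr)) (fun r hr => hyd0 r (hsubo hr))
    have hyle : ∀ r ∈ Icc r₂ c, y r ≤ 0 := fun r hr =>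
      le_trans (hyanti (left_mem_Icc.2 (by linarith)) hr hr.1) hc1
    have hu'le : ∀ r ∈ Icc r₂ c, u' r ≤ 0 := by
      intro r hr
      apply st15_nonpos_of_phi1 (hslope r (hsub hr))
      rw [hphi r (hsub hr)]
      exact div_nonpos_of_nonpos_of_nonneg (hyle r hr) (le_of_lt (hW r (hsub hr)).1)
    have huanti : AntitoneOn u (Icc r₂ c) :=
      st15_anti (hucont.mono hsub) (fun r hr => hdu r (hsubo hr))
        (fun r hr => hu'le r (Ioo_subset_Icc_self hr))
    have hum₃ : 0 < u m₃ := hupos m₃ ⟨by linarith, by linarith⟩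
    set D := C * u m₃ * ((c - a')/4) with hD
    have hDpos : 0 < D := by positivity
    -- z = y + C * u m₃ * r antitone on [r₂, m₃]
    have hzanti : AntitoneOn (fun r => y r + (C * u m₃) * r) (Icc r₂ m₃) := by
      apply st15_anti (F' := fun r => yd r + C * u m₃)
      · exact (hycont.mono (Icc_subset_Icc (by linarith) (by linarith))).add
          (continuousOn_const.mul continuousOn_id)
      · intro r hr
        exact (hdy r ⟨by linarith [hr.1], by linarith [hr.2]⟩).add
          (((hasDerivAt_id r).const_mul (C * u m₃)).congr_deriv (by ring))
      · intro r hr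
        have hrI : r ∈ Ioo a' c := ⟨by linarith [hr.1], by linarith [hr.2]⟩
        have hur : u m₃ ≤ u r := huanti ⟨by linarith [hr.1], by linarith [hr.2]⟩
          ⟨by linarith, by linarith⟩ (le_of_lt hr.2)
        have := hydC r hrI
        nlinarith
    have hym₃ : y m₃ ≤ -D := by
      have h6 := hzanti (left_mem_Icc.2 (by linarith)) (right_mem_Icc.2 (by linarith)) (by linarith)
      simp only at h6
      have h7 : C * u m₃ * m₃ - C * u m₃ * r₂ = C * u m₃ * ((c - a')/4) := by
        rw [← hmr]; ring
      rw [hD]; linarith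
    -- on [m₃, c] : u' ≤ -(D/B)/2
    have hu'str : ∀ r ∈ Icc m₃ c, u' r ≤ -((D/B)/2) := by
      intro r hr
      have hrI : r ∈ Icc a' c := ⟨by linarith [hr.1], hr.2⟩
      apply st15_le_of_phi1_le (hslope r hrI) (by positivity)
      rw [hphi r hrI]
      have hyr : y r ≤ -D := le_trans (hyanti ⟨by linarith, by linarith⟩
        ⟨by linarith [hr.1], hr.2⟩ hr.1) hym₃
      have hWr := hW r hrI
      rw [show -(D/B) = (-D)/B by ring, div_le_div_iff₀ hWr.1 hB]
      nlinarith [mul_le_mul_of_nonneg_right hyr (le_of_lt hB),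
        mul_le_mul_of_nonneg_left hWr.2 (le_of_lt hDpos)]
    -- w = u + ((D/B)/2) r antitone on [m₃, c]
    have hwanti : AntitoneOn (fun r => u r + ((D/B)/2) * r) (Icc m₃ c) := by
      apply st15_anti (F' := fun r => u' r + (D/B)/2)
      · exact (hucont.mono (Icc_subset_Icc (by linarith) le_rfl)).add
          (continuousOn_const.mul continuousOn_id)
      · intro r hr
        exact (hdu r ⟨by linarith [hr.1], hr.2⟩).add
          (((hasDerivAt_id r).const_mul ((D/B)/2)).congr_deriv (by ring))
      · intro r hr
        have := hu'str r (Ioo_subset_Icc_self hr)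
        linarith
    have hfin := hwanti (left_mem_Icc.2 (by linarith)) (right_mem_Icc.2 (by linarith)) (by linarith)
    simp only at hfin
    have huc : 0 < u c := hupos c (right_mem_Icc.2 (by linarith))
    have h5 : (D/B)/2*c - (D/B)/2*m₃ = (D/B)/2*((c - a')/4) := by rw [← hcm]; ring
    have hkey : u c ≤ u m₃ - ((D/B)/2) * ((c - a')/4) := by linarith
    have hQ : (D/B)/2*((c - a')/4) = C * u m₃ * (c - a')^2 / (32*B) := by
      rw [hD]; ring
    have h32 : (0:ℝ) < 32 * B := by linarith
    have hdiv : u m₃ < C * u m₃ * (c - a')^2 / (32*B) := by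
      rw [lt_div_iff₀ h32]
      nlinarith [mul_lt_mul_of_pos_left hCB hum₃]
    rw [hQ] at hkey
    linarith
  · -- increasing case on [a', r₂]
    have hsub : Icc a' r₂ ⊆ Icc a' c := Icc_subset_Icc le_rfl (by linarith)
    have hsubo : Ioo a' r₂ ⊆ Ioo a' c := Ioo_subset_Ioo le_rfl (by linarith)
    have hyanti : AntitoneOn y (Icc a' r₂) :=
      st15_anti (hycont.mono hsub) (fun r hr => hdy r (hsubo hr)) (fun r hr => hyd0 r (hsubo hr))
    have hyge : ∀ r ∈ Icc a' r₂, 0 ≤ y r := fun r hr =>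
      le_trans (le_of_lt hc2) (hyanti hr (right_mem_Icc.2 (by linarith)) hr.2)
    have hu'ge : ∀ r ∈ Icc a' r₂, 0 ≤ u' r := by
      intro r hr
      apply st15_nonneg_of_phi1 (hslope r (hsub hr))
      rw [hphi r (hsub hr)]
      exact div_nonneg (hyge r hr) (le_of_lt (hW r (hsub hr)).1)
    have humono : MonotoneOn u (Icc a' r₂) :=
      st15_mono (hucont.mono hsub) (fun r hr => hdu r (hsubo hr))
        (fun r hr => hu'ge r (Ioo_subset_Icc_self hr))
    have hus₁ : 0 < u s₁ := hupos s₁ ⟨by linarith, by linarith⟩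
    set D := C * u s₁ * ((c - a')/4) with hD
    have hDpos : 0 < D := by positivity
    have hzanti : AntitoneOn (fun r => y r + (C * u s₁) * r) (Icc s₁ r₂) := by
      apply st15_anti (F' := fun r => yd r + C * u s₁)
      · exact (hycont.mono (Icc_subset_Icc (by linarith) (by linarith))).add
          (continuousOn_const.mul continuousOn_id)
      · intro r hr
        exact (hdy r ⟨by linarith [hr.1], by linarith [hr.2]⟩).add
          (((hasDerivAt_id r).const_mul (C * u s₁)).congr_deriv (by ring))
      · intro r hr
        have hrI : r ∈ Ioo a' c := ⟨by linarith [hr.1], by linarith [hr.2]⟩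
        have hur : u s₁ ≤ u r := humono ⟨by linarith, by linarith⟩
          ⟨by linarith [hr.1], by linarith [hr.2]⟩ (le_of_lt hr.1)
        have := hydC r hrI
        nlinarith
    have hys₁ : D ≤ y s₁ := by
      have h6 := hzanti (left_mem_Icc.2 (by linarith)) (right_mem_Icc.2 (by linarith)) (by linarith)
      simp only at h6
      have h7 : C * u s₁ * r₂ - C * u s₁ * s₁ = C * u s₁ * ((c - a')/4) := by
        rw [← hsr]; ring
      rw [hD]; linarith
    have hu'str : ∀ r ∈ Icc a' s₁, (D/B)/2 ≤ u' r := by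
      intro r hr
      have hrI : r ∈ Icc a' c := ⟨hr.1, by linarith [hr.2]⟩
      apply st15_ge_of_phi1_ge (hslope r hrI) (by positivity)
      rw [hphi r hrI]
      have hyr : D ≤ y r := le_trans hys₁ (hyanti ⟨hr.1, by linarith [hr.2]⟩
        ⟨by linarith, by linarith⟩ hr.2)
      have hWr := hW r hrI
      rw [div_le_div_iff₀ hB hWr.1]
      nlinarith [mul_le_mul_of_nonneg_right hyr (le_of_lt hB),
        mul_le_mul_of_nonneg_left hWr.2 (le_of_lt hDpos)]
    have hwmono : MonotoneOn (fun r => u r - ((D/B)/2) * r) (Icc a' s₁) := by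
      apply st15_mono (F' := fun r => u' r - (D/B)/2)
      · exact (hucont.mono (Icc_subset_Icc le_rfl (by linarith))).sub
          (continuousOn_const.mul continuousOn_id)
      · intro r hr
        exact (hdu r ⟨hr.1, by linarith [hr.2]⟩).sub
          (((hasDerivAt_id r).const_mul ((D/B)/2)).congr_deriv (by ring))
      · intro r hr
        have := hu'str r (Ioo_subset_Icc_self hr)
        linarith
    have hfin := hwmono (left_mem_Icc.2 (by linarith)) (right_mem_Icc.2 (by linarith)) (by linarith)
    simp only at hfin
    have hua' : 0 < u a' := hupos a' (left_mem_Icc.2 (by linarith))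
    have h5 : (D/B)/2*s₁ - (D/B)/2*a' = (D/B)/2*((c - a')/4) := by rw [← hsa]; ring
    have hkey : u a' + ((D/B)/2) * ((c - a')/4) ≤ u s₁ := by linarith
    have hQ : (D/B)/2*((c - a')/4) = C * u s₁ * (c - a')^2 / (32*B) := by
      rw [hD]; ring
    have h32 : (0:ℝ) < 32 * B := by linarith
    have hdiv : u s₁ < C * u s₁ * (c - a')^2 / (32*B) := by
      rw [lt_div_iff₀ h32]
      nlinarith [mul_lt_mul_of_pos_left hCB hus₁]
    rw [hQ] at hkey
    linarith

set_option maxHeartbeats 2000000 in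
/-- Lemma 4.2. Under (A1) and (A3) (with `δ = 0`), for any
`λ̂ > 0` the nodal solutions in `S_{k,0}` of the truncated problems `(4.7)_n`
are uniformly bounded away from zero: `sup |u| ≥ b̂` with `b̂` independent of
`n` and `u`. -/
theorem stmt15 (N : ℕ) (hN : 2 ≤ N) (R : ℝ) (hR : 0 < R)
    (α : EReal) (f : ℝ → ℝ → ℝ)
    (hA1 : CondA1 R α f) (hA3 : CondA3 0 R f)
    (k : ℕ) (hk : 1 ≤ k) (lam : ℝ) (hlam : 0 < lam) :
    ∃ b : ℝ, 0 < b ∧ ∀ n : ℕ, 1 ≤ n → ∀ u u' : ℝ → ℝ,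
      (∀ r ∈ Icc (0:ℝ) R, HasDerivWithinAt u (u' r) (Icc (0:ℝ) R) r) →
      ContinuousOn u' (Icc (0:ℝ) R) →
      (∃ g : ℝ → ℝ, ContinuousOn g (Icc (0:ℝ) R) ∧
        (∀ r ∈ Icc (0:ℝ) R,
          HasDerivWithinAt (fun t => t ^ (N - 1) * u' t) (g r) (Icc (0:ℝ) R) r) ∧
        ∀ r ∈ Ioo (0:ℝ) R, -g r + (N - 1 : ℝ) * r ^ (N - 2) * (u' r) ^ 3 =
          lam * r ^ (N - 1) * (if r ≤ 1 / (n : ℝ) then 0 else f (r - 1 / (n : ℝ)) (u r))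
            * hcap (u' r)) →
      u' 0 = 0 → u R = 0 →
      -- u ∈ S_{k,0}
      (∃ Z : Finset ℝ, Z.card = k - 1 ∧
        (∀ r : ℝ, r ∈ Z ↔ r ∈ Ioo (0:ℝ) R ∧ u r = 0) ∧ ∀ r ∈ Z, u' r ≠ 0) →
      (∃ σ : ℝ, 0 < σ ∧
        ((∀ r ∈ Ioo (0:ℝ) σ, 0 < u r) ∨ ∀ r ∈ Ioo (0:ℝ) σ, u r < 0)) →
      ∃ r ∈ Icc (0:ℝ) R, b ≤ |u r| := by
  obtain ⟨K, rfl⟩ : ∃ K, N = K + 2 := ⟨N - 2, by omega⟩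
  clear hN
  obtain ⟨hRα, hfc, -⟩ := hA1
  obtain ⟨hf0, hA3s⟩ := hA3
  set A := (R/2)^(K+1) with hAdef
  set B := R^(K+1) with hBdef
  have hApos : 0 < A := pow_pos (by linarith) _
  have hBpos : 0 < B := pow_pos hR _
  set n₀ : ℕ := Nat.floor (1/R) + 1 with hn₀def
  have hn₀pos : (0:ℝ) < (n₀:ℝ) := by
    rw [hn₀def]; push_cast; positivity
  have hn₀R : 1/((n₀:ℝ)) < R := by
    have h1 : 1/R < (n₀:ℝ) := by
      rw [hn₀def]; push_cast
      exact Nat.lt_floor_add_one (1/R)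
    rw [div_lt_iff₀ hn₀pos]
    rw [div_lt_iff₀ hR] at h1
    linarith
  set Ls := min (R/2) (R - 1/((n₀:ℝ))) with hLsdef
  have hLspos : 0 < Ls := lt_min (by linarith) (by linarith)
  have hkR : (1:ℝ) ≤ (k:ℝ) := by exact_mod_cast hk
  set ℓs := Ls/(4*(k:ℝ)) with hℓsdef
  have hℓspos : 0 < ℓs := by rw [hℓsdef]; positivity
  set M := 32*B/(lam*A*ℓs^2) + 1 with hMdef
  have hMpos : 0 < M := by
    have : 0 ≤ 32*B/(lam*A*ℓs^2) := by positivity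
    rw [hMdef]; linarith
  obtain ⟨η₀, hη₀pos, hfM⟩ := hA3s M
  set S₀ := ((K:ℝ)+2)/(2*lam*R) with hS₀def
  have hS₀pos : 0 < S₀ := by rw [hS₀def]; positivity
  obtain ⟨b₁, hb₁pos, hsmall⟩ := st15_small R hR α f hfc hRα hf0 S₀ hS₀pos
  have hmη : 0 < min η₀ (1/2) := lt_min hη₀pos (by norm_num)
  clear_value A B n₀ Ls ℓs M S₀
  refine ⟨min b₁ (min η₀ (1/2)/2), lt_min hb₁pos (by linarith), ?_⟩
  set b := min b₁ (min η₀ (1/2)/2) with hbdef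
  clear_value b
  intro n hn u u' hu hu'c hgE hu'0 huR hZE hsigE
  obtain ⟨g, -, hg0, heq0⟩ := hgE
  obtain ⟨Z, hZcard, hZmem, -⟩ := hZE
  by_contra hcontra
  push_neg at hcontra
  -- basic facts
  have hn1 : (1:ℝ) ≤ (n:ℝ) := by exact_mod_cast hn
  have hnpos : (0:ℝ) < 1/(n:ℝ) := by positivity
  have hucont : ContinuousOn u (Icc (0:ℝ) R) := fun r hr => (hu r hr).continuousWithinAt
  have hbub : ∀ r ∈ Icc (0:ℝ) R, |u r| < b := hcontra
  have hb_b₁ : b ≤ b₁ := by rw [hbdef]; exact min_le_left _ _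
  have hb_half : b ≤ 1/4 := by
    have h1 : b ≤ min η₀ (1/2)/2 := by rw [hbdef]; exact min_le_right _ _
    have h2 : min η₀ (1/2) ≤ 1/2 := min_le_right _ _
    linarith only [h1, h2]
  have hb_η : b ≤ η₀/2 := by
    have h1 : b ≤ min η₀ (1/2)/2 := by rw [hbdef]; exact min_le_right _ _
    have h2 : min η₀ (1/2) ≤ η₀ := min_le_left _ _
    linarith only [h1, h2]
  -- index juggling
  have hKe1 : K + 2 - 1 = K + 1 := by omega
  have hKe2 : K + 2 - 2 = K := by omega
  set fe : ℝ → ℝ := fun r => if r ≤ 1/(n:ℝ) then (0:ℝ) else f (r - 1/(n:ℝ)) (u r) with hfedef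
  have hg : ∀ r ∈ Icc (0:ℝ) R,
      HasDerivWithinAt (fun t => t ^ (K+1) * u' t) (g r) (Icc (0:ℝ) R) r := by
    simpa [hKe1] using hg0
  have heq : ∀ r ∈ Ioo (0:ℝ) R, -g r + ((K:ℝ)+1) * r ^ K * (u' r)^3
      = lam * r^(K+1) * fe r * hcap (u' r) := by
    intro r hr
    have h := heq0 r hr
    rw [hKe1, hKe2] at h
    push_cast at h
    have hcst : ((K:ℝ)+2) - 1 = (K:ℝ)+1 := by ring
    rw [hcst] at h
    simpa [hfedef] using h
  have hfeS : ∀ r ∈ Icc (0:ℝ) R, |fe r| ≤ S₀ := by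
    intro r hr
    by_cases hc : r ≤ 1/(n:ℝ)
    · simp only [hfedef, if_pos hc, abs_zero]; linarith
    · push_neg at hc
      simp only [hfedef, if_neg (not_le.2 hc)]
      exact hsmall (r - 1/(n:ℝ)) ⟨by linarith, by linarith [hr.2]⟩ (u r)
        (le_trans (le_of_lt (hbub r hr)) hb_b₁)
  -- the transformed function y
  set y : ℝ → ℝ := fun r => r^(K+1) * phi1 (u' r) with hydef
  set yd : ℝ → ℝ := fun r => -(lam * r^(K+1) * fe r) with hyddef
  have hyDcond : ∀ r ∈ Ioo (0:ℝ) R, |u' r| < 1 →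
      HasDerivWithinAt y (yd r) (Icc (0:ℝ) R) r := by
    intro r hr h1
    have h2 := st15_yderiv K R lam u u' g fe hg heq hr h1
    simpa [hydef, hyddef] using h2
  have hycOn : ∀ p q : ℝ, Icc p q ⊆ Icc (0:ℝ) R → (∀ x ∈ Icc p q, |u' x| ≤ 1/2) →
      ContinuousOn y (Icc p q) := by
    intro p q hsub hb'
    have h1 : ContinuousOn u' (Icc p q) := hu'c.mono hsub
    have h2 : ContinuousOn (fun x => phi1 (u' x)) (Icc p q) := by
      simp only [phi1]
      exact h1.div
        (Real.continuous_sqrt.comp_continuousOn (continuousOn_const.sub (h1.pow 2)))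
        (fun x hx => ne_of_gt (st15_sqrt_pos (hb' x hx)))
    exact ((continuous_pow (K+1)).continuousOn).mul h2
  -- global slope bound
  have hsl : ∀ r ∈ Icc (0:ℝ) R, |u' r| < 1/2 := by
    intro r₁ hr₁
    by_contra hge
    push_neg at hge
    set E := {x : ℝ | x ∈ Icc (0:ℝ) R ∧ 1/2 ≤ |u' x|} with hEdef
    have hEne : E.Nonempty := ⟨r₁, hr₁, hge⟩
    have hEbdd : BddBelow E := ⟨0, fun x hx => hx.1.1⟩
    set τ := sInf E with hτdef
    have hτcl : τ ∈ closure E := csInf_mem_closure hEne hEbdd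
    have hEIcc : E ⊆ Icc (0:ℝ) R := fun x hx => hx.1
    have hτIcc : τ ∈ Icc (0:ℝ) R := isClosed_Icc.closure_subset ((closure_mono hEIcc) hτcl)
    have hu'τ : 1/2 ≤ |u' τ| := by
      haveI hne : (𝓝[E] τ).NeBot := mem_closure_iff_nhdsWithin_neBot.1 hτcl
      have ht : Tendsto (fun x => |u' x|) (𝓝[E] τ) (𝓝 |u' τ|) :=
        ((hu'c τ hτIcc).mono hEIcc).abs
      exact ge_of_tendsto ht (eventually_nhdsWithin_of_forall (fun x hx => hx.2))
    have hτpos : 0 < τ := by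
      rcases eq_or_lt_of_le hτIcc.1 with h | h
      · exfalso; rw [← h, hu'0] at hu'τ; norm_num at hu'τ
      · exact h
    have hτlt : ∀ x ∈ Icc (0:ℝ) R, x < τ → |u' x| < 1/2 := by
      intro x hx hlt
      by_contra hcx
      push_neg at hcx
      exact absurd (csInf_le hEbdd ⟨hx, hcx⟩) (not_le.2 hlt)
    have hτle : |u' τ| ≤ 1/2 := by
      have hioo : τ ∈ closure (Ioo 0 τ) := by
        rw [closure_Ioo (ne_of_lt hτpos)]
        exact right_mem_Icc.2 (le_of_lt hτpos)
      haveI hne2 : (𝓝[Ioo 0 τ] τ).NeBot := mem_closure_iff_nhdsWithin_neBot.1 hioo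
      have hsub2 : Ioo 0 τ ⊆ Icc (0:ℝ) R :=
        fun x hx => ⟨le_of_lt hx.1, le_trans (le_of_lt hx.2) hτIcc.2⟩
      have ht2 : Tendsto (fun x => |u' x|) (𝓝[Ioo 0 τ] τ) (𝓝 |u' τ|) :=
        ((hu'c τ hτIcc).mono hsub2).abs
      exact le_of_tendsto ht2 (eventually_nhdsWithin_of_forall
        (fun x hx => le_of_lt (hτlt x (hsub2 hx) hx.2)))
    have hbτ : ∀ x ∈ Icc 0 τ, |u' x| ≤ 1/2 := by
      intro x hx
      rcases lt_or_eq_of_le hx.2 with h | h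
      · exact le_of_lt (hτlt x ⟨hx.1, le_trans hx.2 hτIcc.2⟩ h)
      · rw [h]; exact hτle
    have hsubτ : Icc (0:ℝ) τ ⊆ Icc (0:ℝ) R := Icc_subset_Icc le_rfl hτIcc.2
    have hycτ : ContinuousOn y (Icc 0 τ) := hycOn 0 τ hsubτ hbτ
    have hdyτ : ∀ x ∈ Ioo (0:ℝ) τ, HasDerivAt y (yd x) x := by
      intro x hx
      have hxR : x ∈ Ioo (0:ℝ) R := ⟨hx.1, lt_of_lt_of_le hx.2 hτIcc.2⟩
      have h1 : |u' x| < 1 := by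
        have := hτlt x (Ioo_subset_Icc_self hxR) hx.2
        linarith
      exact (hyDcond x hxR h1).hasDerivAt (Icc_mem_nhds hxR.1 hxR.2)
    have hdpow : ∀ x : ℝ, HasDerivAt (fun t : ℝ => (lam*S₀/((K:ℝ)+2)) * t^(K+2))
        (lam*S₀*x^(K+1)) x := by
      intro x
      have h := (hasDerivAt_pow (K+2) x).const_mul (lam*S₀/((K:ℝ)+2))
      have h2 : K + 2 - 1 = K + 1 := by omega
      rw [h2] at h
      refine h.congr_deriv ?_
      push_cast
      have hK2 : ((K:ℝ)+2) ≠ 0 := by positivity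
      rw [← mul_assoc, div_mul_cancel₀ _ hK2]
    have hpcont : ContinuousOn (fun t : ℝ => (lam*S₀/((K:ℝ)+2)) * t^(K+2)) (Icc 0 τ) :=
      (continuousOn_const.mul ((continuous_pow (K+2)).continuousOn))
    have hfbound : ∀ x ∈ Ioo (0:ℝ) τ, (0:ℝ) ≤ yd x + lam*S₀*x^(K+1) := by
      intro x hx
      have hxI : x ∈ Icc (0:ℝ) R := ⟨le_of_lt hx.1, le_trans (le_of_lt hx.2) hτIcc.2⟩
      have h1 := abs_le.1 (hfeS x hxI)
      have h2 : (0:ℝ) ≤ x^(K+1) := pow_nonneg (le_of_lt hx.1) _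
      simp only [hyddef]
      nlinarith [mul_le_mul_of_nonneg_left h1.2 (mul_nonneg (le_of_lt hlam) h2)]
    have hfbound2 : ∀ x ∈ Ioo (0:ℝ) τ, yd x - lam*S₀*x^(K+1) ≤ 0 := by
      intro x hx
      have hxI : x ∈ Icc (0:ℝ) R := ⟨le_of_lt hx.1, le_trans (le_of_lt hx.2) hτIcc.2⟩
      have h1 := abs_le.1 (hfeS x hxI)
      have h2 : (0:ℝ) ≤ x^(K+1) := pow_nonneg (le_of_lt hx.1) _
      simp only [hyddef]
      nlinarith [mul_le_mul_of_nonneg_left h1.1 (mul_nonneg (le_of_lt hlam) h2)]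
    have hmono : MonotoneOn (fun x => y x + (lam*S₀/((K:ℝ)+2)) * x^(K+2)) (Icc 0 τ) := by
      apply st15_mono (F' := fun x => yd x + lam*S₀*x^(K+1)) (hycτ.add hpcont)
      · exact fun x hx => (hdyτ x hx).add (hdpow x)
      · exact hfbound
    have hanti : AntitoneOn (fun x => y x - (lam*S₀/((K:ℝ)+2)) * x^(K+2)) (Icc 0 τ) := by
      apply st15_anti (F' := fun x => yd x - lam*S₀*x^(K+1)) (hycτ.sub hpcont)
      · exact fun x hx => (hdyτ x hx).sub (hdpow x)
      · exact hfbound2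
    have hy0 : y 0 = 0 := by simp [hydef]
    have hτm : (0:ℝ) ∈ Icc (0:ℝ) τ := left_mem_Icc.2 (le_of_lt hτpos)
    have hτm2 : τ ∈ Icc (0:ℝ) τ := right_mem_Icc.2 (le_of_lt hτpos)
    have hlow := hmono hτm hτm2 (le_of_lt hτpos)
    have hhigh := hanti hτm hτm2 (le_of_lt hτpos)
    simp only [hy0] at hlow hhigh
    norm_num at hlow hhigh
    -- |y τ| ≤ (lam S₀/(K+2)) τ^{K+2}
    have hyabs : |y τ| ≤ (lam*S₀/((K:ℝ)+2)) * τ^(K+2) := abs_le.2 ⟨by linarith, by linarith⟩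
    have hpowpos : (0:ℝ) < τ^(K+1) := pow_pos hτpos _
    have hyabs2 : |y τ| = τ^(K+1) * |phi1 (u' τ)| := by
      simp only [hydef]
      rw [abs_mul, abs_of_pos hpowpos]
    have hstep : τ^(K+1) * |phi1 (u' τ)| ≤ τ^(K+1) * ((lam*S₀/((K:ℝ)+2)) * τ) := by
      rw [← hyabs2]
      calc |y τ| ≤ (lam*S₀/((K:ℝ)+2)) * τ^(K+2) := hyabs
        _ = τ^(K+1) * ((lam*S₀/((K:ℝ)+2)) * τ) := by rw [pow_succ]; ring
    have hphib : |phi1 (u' τ)| ≤ (lam*S₀/((K:ℝ)+2)) * τ :=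
      le_of_mul_le_mul_left (by linarith [hstep]) hpowpos
    have hcR : (lam*S₀/((K:ℝ)+2)) * R = 1/2 := by
      rw [hS₀def]
      field_simp
    have hphible : |phi1 (u' τ)| ≤ 1/2 := by
      have h3 : (lam*S₀/((K:ℝ)+2)) * τ ≤ (lam*S₀/((K:ℝ)+2)) * R := by
        have h4 : (0:ℝ) ≤ lam*S₀/((K:ℝ)+2) :=
          div_nonneg (mul_nonneg (le_of_lt hlam) (le_of_lt hS₀pos)) (by positivity)
        exact mul_le_mul_of_nonneg_left hτIcc.2 h4
      linarith [hcR]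
    -- but |u' τ| = 1/2 gives |phi1| = phi1(1/2) > 1/2
    have habs : |u' τ| = 1/2 := le_antisymm hτle hu'τ
    have hsq : (u' τ)^2 = 1/4 := by
      rw [← sq_abs, habs]; norm_num
    rw [st15_phi1_abs, habs, hsq] at hphible
    have h34 : (0:ℝ) < Real.sqrt (1 - 1/4) := Real.sqrt_pos.2 (by norm_num)
    rw [div_le_iff₀ h34] at hphible
    have hT1 : (1:ℝ) ≤ Real.sqrt (1 - 1/4) := by linarith only [hphible]
    have hT2 := Real.sq_sqrt (show (0:ℝ) ≤ 1 - 1/4 by norm_num)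
    nlinarith only [hT1, hT2]
  have hsl' : ∀ r ∈ Icc (0:ℝ) R, |u' r| ≤ 1/2 := fun r hr => le_of_lt (hsl r hr)
  have hyD : ∀ r ∈ Ioo (0:ℝ) R, HasDerivWithinAt y (yd r) (Icc (0:ℝ) R) r :=
    fun r hr => hyDcond r hr (by linarith [hsl r (Ioo_subset_Icc_self hr)])
  have hycont : ContinuousOn y (Icc (0:ℝ) R) := hycOn 0 R subset_rfl hsl'
  have hZfin := Z.finite_toSet
  -- rule out R ≤ 1/n
  have hnR : 1/(n:ℝ) < R := by
    by_contra hRn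
    push_neg at hRn
    have hfe0 : ∀ x ∈ Ioo (0:ℝ) R, fe x = 0 := by
      intro x hx
      simp only [hfedef, if_pos (le_trans (le_of_lt hx.2) hRn)]
    have hdy : ∀ x ∈ Ioo (0:ℝ) R, HasDerivAt y (yd x) x :=
      fun x hx => (hyD x hx).hasDerivAt (Icc_mem_nhds hx.1 hx.2)
    have hyd0 : ∀ x ∈ Ioo (0:ℝ) R, yd x = 0 := by
      intro x hx; simp [hyddef, hfe0 x hx]
    have hymono : MonotoneOn y (Icc (0:ℝ) R) :=
      st15_mono hycont hdy (fun x hx => le_of_eq (hyd0 x hx).symm)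
    have hyanti : AntitoneOn y (Icc (0:ℝ) R) :=
      st15_anti hycont hdy (fun x hx => le_of_eq (hyd0 x hx))
    have hy0 : y 0 = 0 := by simp [hydef]
    have hyzero : ∀ x ∈ Icc (0:ℝ) R, y x = 0 := by
      intro x hx
      have h1 := hymono (left_mem_Icc.2 (by linarith)) hx hx.1
      have h2 := hyanti (left_mem_Icc.2 (by linarith)) hx hx.1
      rw [hy0] at h1 h2
      linarith
    have hu'zero : ∀ x ∈ Icc (0:ℝ) R, u' x = 0 := by
      intro x hx
      rcases eq_or_lt_of_le hx.1 with h | h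
      · rw [← h]; exact hu'0
      · have h1 := hyzero x hx
        simp only [hydef] at h1
        have h2 : phi1 (u' x) = 0 := by
          have h3 : (0:ℝ) < x^(K+1) := pow_pos h _
          rcases mul_eq_zero.1 h1 with h4 | h4
          · exact absurd h4 (ne_of_gt h3)
          · exact h4
        have := st15_phi1_mul (hsl' x hx)
        rw [h2] at this
        simpa using this.symm
    have humono : MonotoneOn u (Icc (0:ℝ) R) :=
      st15_mono hucont (fun x hx => (hu x (Ioo_subset_Icc_self hx)).hasDerivAt
        (Icc_mem_nhds hx.1 hx.2))
        (fun x hx => le_of_eq (hu'zero x (Ioo_subset_Icc_self hx)).symm)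
    have huanti : AntitoneOn u (Icc (0:ℝ) R) :=
      st15_anti hucont (fun x hx => (hu x (Ioo_subset_Icc_self hx)).hasDerivAt
        (Icc_mem_nhds hx.1 hx.2))
        (fun x hx => le_of_eq (hu'zero x (Ioo_subset_Icc_self hx)))
    have huzero : ∀ x ∈ Icc (0:ℝ) R, u x = 0 := by
      intro x hx
      have hRm : R ∈ Icc (0:ℝ) R := right_mem_Icc.2 (by linarith)
      have h1 := humono hx hRm hx.2
      have h2 := huanti hx hRm hx.2
      rw [huR] at h1 h2
      linarith
    have hsubZ : Ioo (0:ℝ) R ⊆ (Z : Set ℝ) := by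
      intro x hx
      exact (hZmem x).2 ⟨hx, huzero x (Ioo_subset_Icc_self hx)⟩
    exact ((Set.infinite_coe_iff.1 (Set.Ioo.infinite hR)).mono hsubZ) hZfin
  -- pigeonhole: find a zero-free closed subinterval
  set j₀ := (1/(n:ℝ) + R)/2 with hj₀def
  set Wd := (R - j₀)/(k:ℝ) with hWddef
  have hj₀R : R/2 < j₀ ∧ j₀ < R ∧ 1/(n:ℝ) < j₀ ∧ 0 < j₀ := by
    refine ⟨by rw [hj₀def]; linarith only [hnpos], by rw [hj₀def]; linarith only [hnR],
      by rw [hj₀def]; linarith only [hnR], by rw [hj₀def]; linarith only [hnpos, hR]⟩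
  obtain ⟨hj₀1, hj₀2, hj₀3, hj₀4⟩ := hj₀R
  have hkne : (k:ℝ) ≠ 0 := ne_of_gt (by linarith only [hkR])
  have hWdpos : 0 < Wd := by
    rw [hWddef]
    exact div_pos (by linarith only [hj₀2]) (by linarith only [hkR])
  have hkW : j₀ + (k:ℝ)*Wd = R := by
    rw [hWddef]
    field_simp
    ring
  have hpig : ∃ i : ℕ, i < k ∧
      ∀ z ∈ Z, z ∉ Icc (j₀ + i*Wd + Wd/4) (j₀ + i*Wd + 3*Wd/4) := by
    by_contra hcp
    push_neg at hcp
    have hex : ∀ i : ℕ, i < k → ∃ z, z ∈ Z ∧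
        z ∈ Icc (j₀ + i*Wd + Wd/4) (j₀ + i*Wd + 3*Wd/4) := by
      intro i hi
      obtain ⟨z, hz1, hz2⟩ := hcp i hi
      exact ⟨z, hz1, hz2⟩
    set F : ℕ → ℝ := fun i => if h : i < k then (hex i h).choose else 0 with hFdef
    have hFspec : ∀ i, (hi : i < k) → F i ∈ Z ∧
        F i ∈ Icc (j₀ + i*Wd + Wd/4) (j₀ + i*Wd + 3*Wd/4) := by
      intro i hi
      have h1 := (hex i hi).choose_spec
      simp only [hFdef, dif_pos hi]
      exact h1
    have hmaps : ∀ i ∈ Finset.range k, F i ∈ Z :=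
      fun i hi => (hFspec i (Finset.mem_range.1 hi)).1
    have hcard : Z.card < (Finset.range k).card := by
      rw [hZcard, Finset.card_range]; omega
    obtain ⟨i, hi, j, hj, hij, hFij⟩ :=
      Finset.exists_ne_map_eq_of_card_lt_of_maps_to hcard hmaps
    rw [Finset.mem_range] at hi hj
    have hkey : ∀ p q : ℕ, p < q → q < k → F p < F q := by
      intro p q hpq hqk
      have h1 := (hFspec p (lt_trans hpq hqk)).2
      have h2 := (hFspec q hqk).2
      have hc : ((p:ℝ)+1) ≤ (q:ℝ) := by exact_mod_cast hpq
      have h3 := h1.2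
      have h4 := h2.1
      nlinarith only [h3, h4, hWdpos, mul_le_mul_of_nonneg_right hc (le_of_lt hWdpos)]
    rcases lt_or_gt_of_ne hij with h | h
    · exact absurd hFij (ne_of_lt (hkey i j h hj))
    · exact absurd hFij.symm (ne_of_lt (hkey j i h hi))
  obtain ⟨i, hik, hino⟩ := hpig
  set a' := j₀ + i*Wd + Wd/4 with ha'def
  set c' := j₀ + i*Wd + 3*Wd/4 with hc'def
  have hiW : (0:ℝ) ≤ (i:ℝ)*Wd := mul_nonneg (Nat.cast_nonneg i) (le_of_lt hWdpos)
  have ha'c : a' < c' := by rw [ha'def, hc'def]; linarith only [hWdpos]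
  have hj₀a : j₀ < a' := by rw [ha'def]; linarith only [hiW, hWdpos]
  have hc'R : c' < R := by
    have hci : (i:ℝ)+1 ≤ (k:ℝ) := by exact_mod_cast hik
    have h1 : (i:ℝ)*Wd ≤ ((k:ℝ)-1)*Wd :=
      mul_le_mul_of_nonneg_right (by linarith only [hci]) (le_of_lt hWdpos)
    have h2 : ((k:ℝ)-1)*Wd = (k:ℝ)*Wd - Wd := by ring
    rw [hc'def]
    linarith only [hkW, h1, h2, hWdpos]
  have hca : c' - a' = Wd/2 := by rw [hc'def, ha'def]; ring
  have hsubIoo : Icc a' c' ⊆ Ioo (0:ℝ) R :=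
    fun x hx => ⟨by linarith only [hx.1, hj₀a, hj₀4], lt_of_le_of_lt hx.2 hc'R⟩
  have hsubIcc : Icc a' c' ⊆ Icc (0:ℝ) R :=
    fun x hx => ⟨by linarith only [hx.1, hj₀a, hj₀4], le_of_lt (lt_of_le_of_lt hx.2 hc'R)⟩
  have hune : ∀ r ∈ Icc a' c', u r ≠ 0 := by
    intro r hr h0
    exact hino r ((hZmem r).2 ⟨hsubIoo hr, h0⟩) hr
  -- the Sturm constant
  have hLsle : Ls ≤ R - 1/(n:ℝ) := by
    rcases le_or_gt (1/(n:ℝ)) (R/2) with h | h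
    · calc Ls ≤ R/2 := by rw [hLsdef]; exact min_le_left _ _
        _ ≤ R - 1/(n:ℝ) := by linarith only [h]
    · have h1 : 1/R < (n:ℝ) := by
        have hnn : (0:ℝ) < (n:ℝ) := by linarith only [hn1]
        rw [div_lt_iff₀ hR]
        have := (div_lt_iff₀ hnn).1 hnR
        linarith only [this]
      have h2 : ((Nat.floor (1/R) : ℕ) : ℝ) ≤ 1/R := Nat.floor_le (by positivity)
      have h4 : Nat.floor (1/R) < n := by exact_mod_cast lt_of_le_of_lt h2 h1
      have h5 : (n₀:ℝ) ≤ (n:ℝ) := by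
        have : n₀ ≤ n := by rw [hn₀def]; omega
        exact_mod_cast this
      have h6 : 1/(n:ℝ) ≤ 1/((n₀:ℝ)) := by
        apply one_div_le_one_div_of_le hn₀pos h5
      calc Ls ≤ R - 1/((n₀:ℝ)) := by rw [hLsdef]; exact min_le_right _ _
        _ ≤ R - 1/(n:ℝ) := by linarith only [h6]
  have hℓWd : ℓs ≤ Wd/2 := by
    have h1 : Wd/2 = (R - 1/(n:ℝ))/(4*(k:ℝ)) := by
      rw [hWddef, hj₀def]
      field_simp
      ring
    rw [hℓsdef, h1]
    gcongr
  have hCB : 32*B < (lam*A*M)*(c' - a')^2 := by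
    have hY : (0:ℝ) < lam*A*ℓs^2 := mul_pos (mul_pos hlam hApos) (pow_pos hℓspos 2)
    have hMeq : M * (lam*A*ℓs^2) = 32*B + lam*A*ℓs^2 := by
      rw [hMdef]
      field_simp
    have h2 : ℓs^2 ≤ (c'-a')^2 := by
      rw [hca]
      nlinarith only [hℓspos, hℓWd]
    have h3 : (lam*A*M)*ℓs^2 ≤ (lam*A*M)*(c'-a')^2 :=
      mul_le_mul_of_nonneg_left h2
        (le_of_lt (mul_pos (mul_pos hlam hApos) hMpos))
    nlinarith only [hMeq, h3, hY]
  have hWb : ∀ r ∈ Icc a' c', 0 < r^(K+1) ∧ r^(K+1) ≤ B := by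
    intro r hr
    have h1 : 0 < r := by linarith [hr.1]
    refine ⟨pow_pos h1 _, ?_⟩
    rw [hBdef]
    exact pow_le_pow_left₀ (le_of_lt h1) (le_of_lt (lt_of_le_of_lt hr.2 hc'R)) _
  have hAr : ∀ r ∈ Icc a' c', A ≤ r^(K+1) := by
    intro r hr
    rw [hAdef]
    exact pow_le_pow_left₀ (by linarith) (by linarith [hr.1]) _
  have huderiv : ∀ r ∈ Icc a' c', HasDerivWithinAt u (u' r) (Icc a' c') r :=
    fun r hr => (hu r (hsubIcc hr)).mono hsubIcc
  have hyderiv : ∀ r ∈ Icc a' c', HasDerivWithinAt y (yd r) (Icc a' c') r :=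
    fun r hr => (hyD r (hsubIoo hr)).mono hsubIcc
  have hslope' : ∀ r ∈ Icc a' c', |u' r| ≤ 1/2 := fun r hr => hsl' r (hsubIcc hr)
  have hfeval : ∀ r ∈ Icc a' c', fe r = f (r - 1/(n:ℝ)) (u r) := by
    intro r hr
    have h1 : 1/(n:ℝ) < r := by linarith only [hr.1, hj₀a, hj₀3]
    simp only [hfedef, if_neg (not_le.2 h1)]
  have hdom : ∀ r ∈ Icc a' c', (r - 1/(n:ℝ)) ∈ Icc (0:ℝ) R := by
    intro r hr
    have h1 : 1/(n:ℝ) < r := by linarith only [hr.1, hj₀a, hj₀3]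
    have h2 := (hsubIcc hr).2
    exact ⟨by linarith only [h1], by linarith only [h2, hnpos]⟩
  have hub2 : ∀ r ∈ Icc a' c', |u r| ≤ 1/2 ∧ |u r| < η₀ := by
    intro r hr
    have h1 := hbub r (hsubIcc hr)
    exact ⟨by linarith only [h1, hb_half], by linarith only [h1, hb_η, hη₀pos]⟩
  rcases lt_or_gt_of_ne (hune a' (left_mem_Icc.2 (le_of_lt ha'c))) with hsgn | hsgn
  · -- u < 0 on the interval
    have huneg : ∀ r ∈ Icc a' c', u r < 0 := by
      intro r hr
      rcases (hune r hr).lt_or_gt with h | h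
      · exact h
      exfalso
      have hsub3 : Icc a' r ⊆ Icc a' c' := Icc_subset_Icc le_rfl hr.2
      obtain ⟨x, hx, hx0⟩ := intermediate_value_Icc hr.1 (hucont.mono (hsub3.trans hsubIcc))
        (⟨le_of_lt hsgn, le_of_lt h⟩ : (0:ℝ) ∈ Icc (u a') (u r))
      exact hune x (hsub3 hx) hx0
    have hinput : ∀ r ∈ Ioo a' c', -(yd r) ≤ 0 ∧ -(yd r) ≤ -((lam*A*M) * (-(u r))) := by
      intro r hr
      have hrI : r ∈ Icc a' c' := Ioo_subset_Icc_self hr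
      have hun := huneg r hrI
      have ⟨half, hηb⟩ := hub2 r hrI
      have hfM' := hfM (r - 1/(n:ℝ)) (hdom r hrI) (u r) (ne_of_lt hun) hηb
      have hphineg : phi1 (u r) < 0 := st15_phi1_neg' half hun
      have hfgt : f (r - 1/(n:ℝ)) (u r) < M * phi1 (u r) := by
        rw [lt_div_iff_of_neg hphineg] at hfM'
        linarith
      have hple : phi1 (u r) ≤ u r := st15_phi1_le_self half (le_of_lt hun)
      have hMple : M * phi1 (u r) ≤ M * u r :=
        mul_le_mul_of_nonneg_left hple (le_of_lt hMpos)
      have hflt : f (r - 1/(n:ℝ)) (u r) < M * u r := lt_of_lt_of_le hfgt hMple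
      have hWr := hWb r hrI
      have hArr := hAr r hrI
      have hfneg : f (r - 1/(n:ℝ)) (u r) < 0 :=
        lt_of_lt_of_le hflt (by nlinarith only [hMpos, hun])
      constructor
      · simp only [hyddef, neg_neg]
        rw [hfeval r hrI]
        nlinarith only [hWr.1, hfneg, hlam, mul_pos hlam hWr.1]
      · simp only [hyddef, neg_neg]
        rw [hfeval r hrI]
        have e1 : lam * r^(K+1) * f (r - 1/(n:ℝ)) (u r) ≤ lam * r^(K+1) * (M * u r) :=
          mul_le_mul_of_nonneg_left (le_of_lt hflt)
            (mul_nonneg (le_of_lt hlam) (le_of_lt hWr.1))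
        have e2 : lam * r^(K+1) * (M * u r) ≤ lam * A * (M * u r) := by
          have hmu : M * u r < 0 := by nlinarith only [hMpos, hun]
          nlinarith only [hArr, hmu, hlam, mul_le_mul_of_nonneg_left hArr (le_of_lt hlam),
            mul_le_mul_of_nonpos_right (mul_le_mul_of_nonneg_left hArr (le_of_lt hlam)) (le_of_lt hmu)]
        nlinarith only [e1, e2]
    exact st15_segKey K B (lam*A*M) a' c' (fun r => -(u r)) (fun r => -(u' r))
      (fun r => -(y r)) (fun r => -(yd r)) ha'c hBpos hCB hWb
      (fun r hr => by simp only [st15_phi1_odd, hydef]; ring)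
      (fun r hr => (huderiv r hr).neg)
      (fun r hr => (hyderiv r hr).neg)
      (fun r hr => (hinput r hr).1)
      (fun r hr => by simpa using (hinput r hr).2)
      (fun r hr => by rw [abs_neg]; exact hslope' r hr)
      (fun r hr => by simpa using huneg r hr)
  · -- u > 0 on the interval
    have hupos : ∀ r ∈ Icc a' c', 0 < u r := by
      intro r hr
      rcases (hune r hr).lt_or_gt with h | h
      swap
      · exact h
      exfalso
      have hsub3 : Icc a' r ⊆ Icc a' c' := Icc_subset_Icc le_rfl hr.2
      obtain ⟨x, hx, hx0⟩ := intermediate_value_Icc' hr.1 (hucont.mono (hsub3.trans hsubIcc))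
        (⟨le_of_lt h, le_of_lt hsgn⟩ : (0:ℝ) ∈ Icc (u r) (u a'))
      exact hune x (hsub3 hx) hx0
    have hinput : ∀ r ∈ Ioo a' c', yd r ≤ 0 ∧ yd r ≤ -((lam*A*M) * u r) := by
      intro r hr
      have hrI : r ∈ Icc a' c' := Ioo_subset_Icc_self hr
      have hup := hupos r hrI
      have ⟨half, hηb⟩ := hub2 r hrI
      have hfM' := hfM (r - 1/(n:ℝ)) (hdom r hrI) (u r) (ne_of_gt hup) hηb
      have hphipos : 0 < phi1 (u r) := st15_phi1_pos half hup
      have hfgt : M * phi1 (u r) < f (r - 1/(n:ℝ)) (u r) := by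
        rw [lt_div_iff₀ hphipos] at hfM'
        linarith
      have hple : u r ≤ phi1 (u r) := st15_self_le_phi1 half (le_of_lt hup)
      have hMple : M * u r ≤ M * phi1 (u r) :=
        mul_le_mul_of_nonneg_left hple (le_of_lt hMpos)
      have hflt : M * u r < f (r - 1/(n:ℝ)) (u r) := lt_of_le_of_lt hMple hfgt
      have hWr := hWb r hrI
      have hArr := hAr r hrI
      have hfpos : 0 < f (r - 1/(n:ℝ)) (u r) :=
        lt_of_le_of_lt (by nlinarith only [hMpos, hup]) hflt
      constructor
      · simp only [hyddef]
        rw [hfeval r hrI]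
        nlinarith only [hWr.1, hfpos, hlam, mul_pos (mul_pos hlam hWr.1) hfpos]
      · simp only [hyddef]
        rw [hfeval r hrI]
        have e1 : lam * A * (M * u r) ≤ lam * r^(K+1) * (M * u r) := by
          have hmu : 0 < M * u r := by nlinarith only [hMpos, hup]
          nlinarith only [mul_le_mul_of_nonneg_right
            (mul_le_mul_of_nonneg_left hArr (le_of_lt hlam)) (le_of_lt hmu)]
        have e2 : lam * r^(K+1) * (M * u r) ≤ lam * r^(K+1) * f (r - 1/(n:ℝ)) (u r) :=
          mul_le_mul_of_nonneg_left (le_of_lt hflt)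
            (mul_nonneg (le_of_lt hlam) (le_of_lt hWr.1))
        nlinarith only [e1, e2]
    exact st15_segKey K B (lam*A*M) a' c' u u' y yd ha'c hBpos hCB hWb
      (fun r hr => rfl)
      huderiv hyderiv
      (fun r hr => (hinput r hr).1)
      (fun r hr => (hinput r hr).2)
      hslope' hupos
end

section
/- Let N ≥ 2 be an integer, 0 < δ < R, and let f satisfy (A1), (A3) and (A4). For each n ∈ ℕ, let u_n be a solution of problem (P)_{δ,1} (parameter λ = 1) having exactly n−1 zeros in (δ,R), all simple. Then lim_{n→∞} sup_{r∈[δ,R]} |u_n(r)| = 0 and lim_{n→∞} sup_{r∈[δ,R]} |u_n'(r)| = 0. -/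
set_option maxHeartbeats 2000000
open Set Filter Topology

lemma sq_lt_one {y : ℝ} (hy : |y| < 1) : y ^ 2 < 1 := by
  nlinarith [abs_nonneg y, sq_abs y]

lemma sqrt1_pos {y : ℝ} (hy : |y| < 1) : 0 < Real.sqrt (1 - y ^ 2) :=
  Real.sqrt_pos.2 (by nlinarith [sq_lt_one hy])

lemma sqrt1_sq {y : ℝ} (hy : |y| < 1) : Real.sqrt (1 - y ^ 2) ^ 2 = 1 - y ^ 2 :=
  Real.sq_sqrt (by nlinarith [sq_lt_one hy])

lemma sqrt1_le_one {y : ℝ} (hy : |y| < 1) : Real.sqrt (1 - y ^ 2) ≤ 1 := by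
  nlinarith [sqrt1_pos hy, sqrt1_sq hy, abs_nonneg y, sq_abs y]

lemma one_add_phi1_sq {y : ℝ} (hy : |y| < 1) : 1 + phi1 y ^ 2 = 1 / (1 - y ^ 2) := by
  have h1 := sqrt1_pos hy
  have h2 := sqrt1_sq hy
  have h0 : (1:ℝ) - y ^ 2 > 0 := by nlinarith [sq_lt_one hy]
  rw [phi1, div_pow, h2]
  field_simp
  ring

lemma sqrt_one_add_phi1_sq {y : ℝ} (hy : |y| < 1) :
    Real.sqrt (1 + phi1 y ^ 2) = 1 / Real.sqrt (1 - y ^ 2) := by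
  rw [one_add_phi1_sq hy, one_div, one_div, Real.sqrt_inv]

lemma phi1_div_sqrt {y : ℝ} (hy : |y| < 1) : phi1 y / Real.sqrt (1 + phi1 y ^ 2) = y := by
  rw [sqrt_one_add_phi1_sq hy, phi1]
  have h1 := sqrt1_pos hy
  field_simp

lemma kin_nonneg {y : ℝ} (hy : |y| < 1) : 0 ≤ 1 / Real.sqrt (1 - y ^ 2) - 1 := by
  have h1 := sqrt1_pos hy
  have := sqrt1_le_one hy
  have : 1 ≤ 1 / Real.sqrt (1 - y ^ 2) := by
    rw [le_div_iff₀ h1]; linarith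
  linarith

lemma mul_phi1_nonneg (y : ℝ) : 0 ≤ y * phi1 y := by
  have : y * phi1 y = y ^ 2 / Real.sqrt (1 - y ^ 2) := by rw [phi1]; ring
  rw [this]; positivity

lemma mul_phi1_le {y : ℝ} (hy : |y| < 1) :
    y * phi1 y ≤ 2 * (1 / Real.sqrt (1 - y ^ 2) - 1) := by
  have h1 := sqrt1_pos hy
  have h2 := sqrt1_sq hy
  have h3 := sqrt1_le_one hy
  have hval : y * phi1 y = (1 - Real.sqrt (1 - y ^ 2) ^ 2) / Real.sqrt (1 - y ^ 2) := by
    rw [phi1, h2]; field_simp; ring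
  rw [hval]
  rw [div_le_iff₀ h1]
  have h4 : (1 / Real.sqrt (1 - y ^ 2)) * Real.sqrt (1 - y ^ 2) = 1 := by field_simp
  nlinarith [sq_nonneg (1 - Real.sqrt (1 - y ^ 2))]

lemma kin_lt {y ε : ℝ} (hy : |y| < 1) (hε : 0 < ε) (hε1 : ε < 1)
    (h : 1 / Real.sqrt (1 - y ^ 2) - 1 < 1 / Real.sqrt (1 - ε ^ 2) - 1) : |y| < ε := by
  have hε' : |ε| < 1 := by rwa [abs_of_pos hε]
  have h1 := sqrt1_pos hy
  have h2 := sqrt1_pos hε'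
  have h3 : Real.sqrt (1 - ε ^ 2) < Real.sqrt (1 - y ^ 2) := by
    have := (div_lt_div_iff₀ h1 h2).1 (by linarith : 1 / Real.sqrt (1 - y ^ 2) < 1 / Real.sqrt (1 - ε ^ 2))
    linarith [this]
  have h4 := sqrt1_sq hy
  have h5 := sqrt1_sq hε'
  have hsq : y ^ 2 < ε ^ 2 := by nlinarith
  have := abs_nonneg y
  nlinarith [sq_abs y]

lemma hasDerivAt_sqrt_one_add_sq (s : ℝ) :
    HasDerivAt (fun y => Real.sqrt (1 + y ^ 2)) (s / Real.sqrt (1 + s ^ 2)) s := by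
  have h0 : (0:ℝ) < 1 + s ^ 2 := by positivity
  have h1 : HasDerivAt (fun y : ℝ => 1 + y ^ 2) (2 * s) s := by
    simpa using ((hasDerivAt_pow 2 s).const_add 1)
  have := (Real.hasDerivAt_sqrt (ne_of_gt h0)).comp s h1
  refine this.congr_deriv ?_
  have : Real.sqrt (1 + s ^ 2) > 0 := Real.sqrt_pos.2 h0
  field_simp

/-- two-sided Gronwall estimate from a point τ. -/
lemma gronwall_two {a b K τ : ℝ} (hK : 0 ≤ K) {E E' : ℝ → ℝ}
    (hc : ContinuousOn E (Icc a b))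
    (hd : ∀ x ∈ Ioo a b, HasDerivAt E (E' x) x)
    (hb : ∀ x ∈ Ioo a b, |E' x| ≤ K * E x)
    (hE0 : ∀ x ∈ Icc a b, 0 ≤ E x)
    (hτ : τ ∈ Icc a b) :
    ∀ r ∈ Icc a b, E r ≤ E τ * Real.exp (K * (b - a)) := by
  have hexp : ∀ c : ℝ, ∀ x : ℝ, HasDerivAt (fun y => Real.exp (c * y)) (c * Real.exp (c * x)) x := by
    intro c x
    have h1 : HasDerivAt (fun y : ℝ => c * y) c x := by
      simpa using (hasDerivAt_id x).const_mul c
    simpa [mul_comm, Function.comp_def] using (Real.hasDerivAt_exp (c * x)).comp x h1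
  -- right side: E r * exp (-K r) antitone on [τ, b]
  have hright : ∀ r ∈ Icc τ b, E r ≤ E τ * Real.exp (K * (r - τ)) := by
    intro r hr
    have hτb : Icc τ b ⊆ Icc a b := Icc_subset_Icc hτ.1 le_rfl
    have hant : AntitoneOn (fun x => E x * Real.exp (-K * x)) (Icc τ b) := by
      apply antitoneOn_of_deriv_nonpos (convex_Icc τ b)
      · exact (hc.mono hτb).mul (Real.continuous_exp.comp (continuous_const.mul continuous_id)).continuousOn
      · intro x hx
        rw [interior_Icc] at hx
        have hx' : x ∈ Ioo a b := ⟨lt_of_le_of_lt hτ.1 hx.1, hx.2⟩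
        exact ((hd x hx').mul (hexp (-K) x)).differentiableAt.differentiableWithinAt
      · intro x hx
        rw [interior_Icc] at hx
        have hx' : x ∈ Ioo a b := ⟨lt_of_le_of_lt hτ.1 hx.1, hx.2⟩
        have hda : HasDerivAt (fun x => E x * Real.exp (-K * x))
            (E' x * Real.exp (-K * x) + E x * (-K * Real.exp (-K * x))) x :=
          (hd x hx').mul (hexp (-K) x)
        rw [hda.deriv]
        have h1 := hb x hx'
        have h2 := Real.exp_pos (-K * x)
        have h3 : E' x ≤ K * E x := le_trans (le_abs_self _) h1
        nlinarith
    have := hant ⟨le_rfl, hτ.2⟩ hr hr.1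
    have hep := Real.exp_pos (-K * τ)
    have hepr := Real.exp_pos (-K * r)
    have key : E r ≤ E τ * (Real.exp (-K * τ) / Real.exp (-K * r)) := by
      rw [mul_div_assoc', le_div_iff₀ hepr]
      simpa using this
    rw [← Real.exp_sub] at key
    convert key using 3
    ring
  have hleft : ∀ r ∈ Icc a τ, E r ≤ E τ * Real.exp (K * (τ - r)) := by
    intro r hr
    have hτa : Icc a τ ⊆ Icc a b := Icc_subset_Icc le_rfl hτ.2
    have hmon : MonotoneOn (fun x => E x * Real.exp (K * x)) (Icc a τ) := by
      apply monotoneOn_of_deriv_nonneg (convex_Icc a τ)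
      · exact (hc.mono hτa).mul (Real.continuous_exp.comp (continuous_const.mul continuous_id)).continuousOn
      · intro x hx
        rw [interior_Icc] at hx
        have hx' : x ∈ Ioo a b := ⟨hx.1, lt_of_lt_of_le hx.2 hτ.2⟩
        exact ((hd x hx').mul (hexp K x)).differentiableAt.differentiableWithinAt
      · intro x hx
        rw [interior_Icc] at hx
        have hx' : x ∈ Ioo a b := ⟨hx.1, lt_of_lt_of_le hx.2 hτ.2⟩
        have hda : HasDerivAt (fun x => E x * Real.exp (K * x))
            (E' x * Real.exp (K * x) + E x * (K * Real.exp (K * x))) x :=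
          (hd x hx').mul (hexp K x)
        rw [hda.deriv]
        have h1 := hb x hx'
        have h2 := Real.exp_pos (K * x)
        have h3 : -(K * E x) ≤ E' x := neg_le_of_abs_le h1
        nlinarith
    have := hmon hr ⟨hτ.1, le_rfl⟩ hr.2
    have hepr := Real.exp_pos (K * r)
    have key : E r ≤ E τ * (Real.exp (K * τ) / Real.exp (K * r)) := by
      rw [mul_div_assoc', le_div_iff₀ hepr]
      simpa using this
    rw [← Real.exp_sub] at key
    convert key using 3
    ring
  intro r hr
  have hEτ : 0 ≤ E τ := hE0 τ hτ
  have hmono : ∀ s t : ℝ, s ≤ t → E τ * Real.exp (K * s) ≤ E τ * Real.exp (K * t) := by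
    intro s t hst
    apply mul_le_mul_of_nonneg_left _ hEτ
    exact Real.exp_le_exp.2 (mul_le_mul_of_nonneg_left hst hK)
  rcases le_total r τ with h | h
  · exact le_trans (hleft r ⟨hr.1, h⟩) (hmono _ _ (by linarith [hτ.2, hr.1]))
  · exact le_trans (hright r ⟨h, hr.2⟩) (hmono _ _ (by linarith [hτ.1, hr.2]))

/-- continuous on Icc, zero on Ioo ⇒ zero on Icc -/
lemma eq_zero_on_Icc_of_Ioo {a b : ℝ} (hab : a < b) {g : ℝ → ℝ}
    (hc : ContinuousOn g (Icc a b)) (h0 : ∀ x ∈ Ioo a b, g x = 0) :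
    ∀ x ∈ Icc a b, g x = 0 := by
  intro x hx
  have hcl : closure (Ioo a b) = Icc a b := closure_Ioo (ne_of_lt hab)
  have hxc : x ∈ closure (Ioo a b) := hcl ▸ hx
  have hne : (nhdsWithin x (Ioo a b)).NeBot := mem_closure_iff_nhdsWithin_neBot.1 hxc
  have h1 : Tendsto g (nhdsWithin x (Ioo a b)) (nhds (g x)) :=
    (hc x hx).mono_left (nhdsWithin_mono x (Ioo_subset_Icc_self))
  have h2 : Tendsto g (nhdsWithin x (Ioo a b)) (nhds 0) := by
    apply Tendsto.congr' _ tendsto_const_nhds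
    filter_upwards [self_mem_nhdsWithin] with y hy
    exact (h0 y hy).symm
  exact tendsto_nhds_unique h1 h2

open intervalIntegral in
lemma mem_uIcc_abs_sub {a b x : ℝ} (hx : x ∈ uIcc a b) : |x - a| ≤ |b - a| := by
  rcases le_total a b with h | h
  · rw [uIcc_of_le h] at hx
    rw [abs_of_nonneg (by linarith [hx.1]), abs_of_nonneg (by linarith)]
    linarith [hx.2]
  · rw [uIcc_of_ge h] at hx
    rw [abs_of_nonpos (by linarith [hx.2]), abs_of_nonpos (by linarith)]
    linarith [hx.1]

open intervalIntegral in
lemma hasDerivWithinAt_F_comp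
    {δ R c c' : ℝ} {f : ℝ → ℝ → ℝ} {u : ℝ → ℝ} {v₀ A : ℝ} {r : ℝ}
    (hδ0 : 0 ≤ δ) (hcc' : c < c')
    (hf : ContinuousOn (fun p : ℝ × ℝ => f p.1 p.2) (Icc 0 R ×ˢ Icc (-c') c'))
    (hr : r ∈ Icc δ R)
    (hu : HasDerivWithinAt u v₀ (Icc δ R) r)
    (hulip : ∀ s ∈ Icc δ R, ∀ t ∈ Icc δ R, |u s - u t| ≤ |s - t|)
    (hub : ∀ t ∈ Icc δ R, |u t| ≤ c) (hc0 : 0 ≤ c)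
    (hFr : HasDerivWithinAt (fun t => ∫ x in (0:ℝ)..(u r), f t x) A (Icc δ R) r) :
    HasDerivWithinAt (fun t => ∫ x in (0:ℝ)..(u t), f t x) (A + f r (u r) * v₀) (Icc δ R) r := by
  have hsub : Icc δ R ⊆ Icc 0 R := Icc_subset_Icc hδ0 le_rfl
  -- integrability
  have hint : ∀ t ∈ Icc δ R, ∀ a ∈ Icc (-c') c', ∀ b ∈ Icc (-c') c',
      IntervalIntegrable (f t) MeasureTheory.volume a b := by
    intro t ht a ha b hb
    apply ContinuousOn.intervalIntegrable
    have : ContinuousOn (f t) (Icc (-c') c') := by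
      have := hf.comp (Continuous.continuousOn (by continuity :
        Continuous (fun x : ℝ => (t, x)))) (fun x hx => ⟨hsub ht, hx⟩)
      exact this
    exact this.mono (uIcc_subset_Icc ha hb)
  have hmemc : ∀ t ∈ Icc δ R, u t ∈ Icc (-c') c' := by
    intro t ht
    have := hub t ht
    rw [abs_le] at this
    constructor <;> linarith [this.1, this.2]
  have h0mem : (0:ℝ) ∈ Icc (-c') c' := ⟨by linarith, by linarith⟩
  set Φ : ℝ → ℝ := fun t => ∫ x in (u r)..(u t), f t x with hΦ
  -- derivative of Φ
  have hΦd : HasDerivWithinAt Φ (f r (u r) * v₀) (Icc δ R) r := by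
    rw [hasDerivWithinAt_iff_isLittleO]
    have hΦr : Φ r = 0 := integral_same
    have heq : ∀ t, Φ t - Φ r - (t - r) • (f r (u r) * v₀) =
        (Φ t - f r (u r) * (u t - u r)) + f r (u r) * (u t - u r - (t - r) • v₀) := by
      intro t; rw [hΦr]; simp [smul_eq_mul]; ring
    simp only [heq]
    apply Asymptotics.IsLittleO.add
    · -- main term
      rw [Asymptotics.isLittleO_iff]
      intro C hC
      have hmemr : ((r, u r) : ℝ × ℝ) ∈ Icc 0 R ×ˢ Icc (-c') c' := ⟨hsub hr, hmemc r hr⟩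
      have hcont : ContinuousWithinAt (fun p : ℝ × ℝ => f p.1 p.2)
          (Icc 0 R ×ˢ Icc (-c') c') (r, u r) := hf _ hmemr
      rcases (Metric.continuousWithinAt_iff.1 hcont) C hC with ⟨η₀, hη₀, hball⟩
      set η := min η₀ (c' - c) with hη
      have hηpos : 0 < η := lt_min hη₀ (by linarith)
      have hev : Metric.ball r η ∩ Icc δ R ∈ nhdsWithin r (Icc δ R) :=
        inter_mem (nhdsWithin_le_nhds (Metric.ball_mem_nhds r hηpos)) self_mem_nhdsWithin
      filter_upwards [hev] with t ⟨htb, htI⟩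
      have htr : |t - r| < η := by rwa [Metric.mem_ball, Real.dist_eq] at htb
      have hutr : |u t - u r| ≤ |t - r| := hulip t htI r hr
      -- rewrite the difference as an integral
      have hintr : IntervalIntegrable (f t) MeasureTheory.volume (u r) (u t) :=
        hint t htI _ (hmemc r hr) _ (hmemc t htI)
      have hconst : f r (u r) * (u t - u r) = ∫ x in (u r)..(u t), f r (u r) := by
        rw [integral_const]; ring_nf
      have hdiff : Φ t - f r (u r) * (u t - u r)
          = ∫ x in (u r)..(u t), (f t x - f r (u r)) := by
        rw [hconst, hΦ]
        exact (integral_sub hintr (intervalIntegrable_const)).symm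
      rw [hdiff]
      have hbd : ∀ x ∈ Set.uIoc (u r) (u t), ‖f t x - f r (u r)‖ ≤ C := by
        intro x hx
        have hx' : x ∈ uIcc (u r) (u t) := Set.uIoc_subset_uIcc hx
        have hxr : |x - u r| ≤ |u t - u r| := mem_uIcc_abs_sub hx'
        have hxr' : |x - u r| ≤ |t - r| := le_trans hxr hutr
        have hxc : x ∈ Icc (-c') c' := by
          have h1 : |x| ≤ |u r| + |x - u r| := by
            calc |x| = |u r + (x - u r)| := by ring_nf
            _ ≤ |u r| + |x - u r| := abs_add_le _ _
          have h2 : |x| ≤ c + (c' - c) := by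
            have := hub r hr
            have h3 : |x - u r| ≤ c' - c := le_trans hxr' (le_of_lt (lt_of_lt_of_le htr (min_le_right _ _)))
            linarith
          rw [abs_le] at h2
          constructor <;> linarith [h2.1, h2.2]
        have hpm : ((t, x) : ℝ × ℝ) ∈ Icc 0 R ×ˢ Icc (-c') c' := ⟨hsub htI, hxc⟩
        have hdist : dist ((t, x) : ℝ × ℝ) (r, u r) < η₀ := by
          rw [Prod.dist_eq]
          apply max_lt
          · rw [Real.dist_eq]; exact lt_of_lt_of_le htr (min_le_left _ _)
          · rw [Real.dist_eq]
            exact lt_of_le_of_lt hxr' (lt_of_lt_of_le htr (min_le_left _ _))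
        have := hball hpm hdist
        rw [Real.dist_eq] at this
        exact le_of_lt this
      calc ‖∫ x in (u r)..(u t), (f t x - f r (u r))‖ ≤ C * |u t - u r| :=
            norm_integral_le_of_norm_le_const hbd
        _ ≤ C * ‖t - r‖ := by
            rw [Real.norm_eq_abs]
            exact mul_le_mul_of_nonneg_left hutr (le_of_lt hC)
    · -- linearization of u
      have := (hasDerivWithinAt_iff_isLittleO.1 hu)
      exact this.const_mul_left (f r (u r))
  -- combine with partial-r derivative
  have hsum : HasDerivWithinAt (fun t => (∫ x in (0:ℝ)..(u r), f t x) + Φ t)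
      (A + f r (u r) * v₀) (Icc δ R) r := hFr.add hΦd
  apply hsum.congr
  · intro t ht
    rw [hΦ]
    exact (integral_add_adjacent_intervals (hint t ht _ h0mem _ (hmemc r hr))
      (hint t ht _ (hmemc r hr) _ (hmemc t ht))).symm
  · show (∫ x in (0:ℝ)..(u r), f r x) = _
    rw [hΦ]
    simp [integral_same]

/-- Step in the proof of Corollary 1.2. Under (A1), (A3),
(A4), if for each `n` the function `u n` is a solution of `(P)_{δ,1}` having
exactly `n-1` simple zeros in `(δ,R)`, then both `u n` and its derivative tend
to `0` uniformly on `[δ,R]` as `n → ∞`. -/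
theorem stmt18 (N : ℕ) (hN : 2 ≤ N) (δ R : ℝ) (hδ : 0 < δ) (hδR : δ < R)
    (α : EReal) (f : ℝ → ℝ → ℝ)
    (hA1 : CondA1 R α f) (hA3 : CondA3 δ R f) (hA4 : CondA4 δ R α f)
    (u v : ℕ → ℝ → ℝ)
    (hsol : ∀ n : ℕ, 1 ≤ n → IsSolP N δ R 1 f (u n) (v n))
    (hzeros : ∀ n : ℕ, 1 ≤ n → ∃ Z : Finset ℝ, Z.card = n - 1 ∧
      (∀ r : ℝ, r ∈ Z ↔ r ∈ Ioo δ R ∧ u n r = 0) ∧ ∀ r ∈ Z, v n r ≠ 0) :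
    (∀ ε : ℝ, 0 < ε → ∃ n₀ : ℕ, ∀ n : ℕ, n₀ ≤ n → ∀ r ∈ Icc δ R, |u n r| < ε) ∧
    (∀ ε : ℝ, 0 < ε → ∃ n₀ : ℕ, ∀ n : ℕ, n₀ ≤ n → ∀ r ∈ Icc δ R, |v n r| < ε) := by
  obtain ⟨hRα, hfcont, hfpos⟩ := hA1
  obtain ⟨hf0, -⟩ := hA3
  obtain ⟨Fr, ω, hωc, hωnn, hA4'⟩ := hA4
  have hR0 : 0 < R := lt_trans hδ hδR
  set c : ℝ := R - δ with hc
  set c' : ℝ := R - δ/2 with hc'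
  have hc0 : 0 ≤ c := by rw [hc]; linarith
  have hcc' : c < c' := by rw [hc, hc']; linarith
  have hc'R : c' < R := by rw [hc']; linarith
  have hc'0 : 0 < c' := by rw [hc']; linarith
  have hαle : ∀ s : ℝ, |s| ≤ c' → ((|s| : ℝ) : EReal) < α := by
    intro s hs
    refine lt_of_le_of_lt ?_ hRα
    exact_mod_cast le_of_lt (lt_of_le_of_lt hs hc'R)
  have hfK : ContinuousOn (fun p : ℝ × ℝ => f p.1 p.2) (Icc 0 R ×ˢ Icc (-c') c') := by
    apply hfcont.mono
    rintro ⟨r, s⟩ ⟨h1, h2⟩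
    exact ⟨h1, hαle s (abs_le.2 ⟨h2.1, h2.2⟩)⟩
  have hIcc0R : Icc δ R ⊆ Icc 0 R := Icc_subset_Icc (le_of_lt hδ) le_rfl
  have hfpos' : ∀ r ∈ Icc δ R, ∀ x : ℝ, 0 < x → x ≤ c' → 0 < f r x := by
    intro r hr x hx hxc
    have h := hfpos r (hIcc0R hr) x (hαle x (by rwa [abs_of_pos hx])) (ne_of_gt hx)
    nlinarith
  have hfneg' : ∀ r ∈ Icc δ R, ∀ x : ℝ, x < 0 → -c' ≤ x → f r x < 0 := by
    intro r hr x hx hxc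
    have h := hfpos r (hIcc0R hr) x (hαle x (by rw [abs_of_neg hx]; linarith)) (ne_of_lt hx)
    nlinarith
  have hfnn : ∀ r ∈ Icc δ R, ∀ x : ℝ, 0 ≤ x → x ≤ c' → 0 ≤ f r x := by
    intro r hr x hx hxc
    rcases eq_or_lt_of_le hx with h | h
    · rw [← h]; rw [hf0 r hr]
    · exact le_of_lt (hfpos' r hr x h hxc)
  have hfnp : ∀ r ∈ Icc δ R, ∀ x : ℝ, x ≤ 0 → -c' ≤ x → f r x ≤ 0 := by
    intro r hr x hx hxc
    rcases eq_or_lt_of_le hx with h | h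
    · rw [h]; rw [hf0 r hr]
    · exact le_of_lt (hfneg' r hr x h hxc)
  have hint : ∀ t ∈ Icc δ R, ∀ a ∈ Icc (-c') c', ∀ b ∈ Icc (-c') c',
      IntervalIntegrable (f t) MeasureTheory.volume a b := by
    intro t ht a ha b hb
    apply ContinuousOn.intervalIntegrable
    have h2 : ContinuousOn (f t) (Icc (-c') c') :=
      hfK.comp (Continuous.continuousOn (by continuity : Continuous (fun x : ℝ => (t, x))))
        (fun x hx => ⟨hIcc0R ht, hx⟩)
    exact h2.mono (uIcc_subset_Icc ha hb)
  have hFnn : ∀ r ∈ Icc δ R, ∀ s : ℝ, |s| ≤ c → 0 ≤ ∫ x in (0:ℝ)..s, f r x := by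
    intro r hr s hs
    have hsc' : |s| ≤ c' := le_trans hs (le_of_lt hcc')
    rw [abs_le] at hsc'
    rcases le_total 0 s with h | h
    · apply intervalIntegral.integral_nonneg h
      intro x hx
      exact hfnn r hr x hx.1 (le_trans hx.2 hsc'.2)
    · rw [intervalIntegral.integral_symm s 0]
      have hnn : 0 ≤ ∫ x in s..(0:ℝ), -(f r x) := by
        apply intervalIntegral.integral_nonneg h
        intro x hx
        simp only [neg_nonneg]
        exact hfnp r hr x hx.2 (le_trans hsc'.1 hx.1)
      rw [intervalIntegral.integral_neg] at hnn
      linarith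
  -- global bounds on f and ω
  have hrect : IsCompact (Icc (0:ℝ) R ×ˢ Icc (-c') c') := isCompact_Icc.prod isCompact_Icc
  have hrectne : (Icc (0:ℝ) R ×ˢ Icc (-c') c').Nonempty := by
    refine ⟨(0, 0), ⟨le_rfl, le_of_lt hR0⟩, ?_, ?_⟩ <;> simp <;> linarith
  obtain ⟨pB, hpB, hpBmax⟩ := hrect.exists_isMaxOn hrectne hfK.abs
  set B := |f pB.1 pB.2| with hBdef
  have hB0 : 0 ≤ B := abs_nonneg _
  have hBb : ∀ p ∈ Icc (0:ℝ) R ×ˢ Icc (-c') c', |f p.1 p.2| ≤ B := fun p hp => hpBmax hp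
  obtain ⟨rW, hrW, hrWmax⟩ := isCompact_Icc.exists_isMaxOn (nonempty_Icc.2 (le_of_lt hδR)) hωc
  set W := ω rW with hWdef
  have hW0 : 0 ≤ W := hωnn rW hrW
  set K := W + 2 * ((N:ℝ) - 1) / δ with hKdef
  have hN1 : (1:ℝ) ≤ (N:ℝ) - 1 := by
    have : (2:ℝ) ≤ (N:ℝ) := by exact_mod_cast hN
    linarith
  have hK2 : 0 ≤ 2 * ((N:ℝ) - 1) / δ := div_nonneg (by linarith) (le_of_lt hδ)
  have hK0 : 0 ≤ K := add_nonneg hW0 hK2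
  -- per-n basic facts
  have hvlt' : ∀ n, 1 ≤ n → ∀ r ∈ Icc δ R, |v n r| < 1 := fun n hn => (hsol n hn).2.2.1
  have hulip' : ∀ n, 1 ≤ n → ∀ s ∈ Icc δ R, ∀ t ∈ Icc δ R, |u n s - u n t| ≤ |s - t| := by
    intro n hn s hs t ht
    obtain ⟨hud, -, hvlt, -, -, -⟩ := hsol n hn
    have h1 := Convex.norm_image_sub_le_of_norm_hasDerivWithin_le hud
      (fun x hx => by rw [Real.norm_eq_abs]; exact le_of_lt (hvlt x hx)) (convex_Icc δ R) ht hs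
    rw [Real.norm_eq_abs, Real.norm_eq_abs] at h1
    linarith
  have hub' : ∀ n, 1 ≤ n → ∀ t ∈ Icc δ R, |u n t| ≤ c := by
    intro n hn t ht
    obtain ⟨-, -, -, -, -, huR⟩ := hsol n hn
    have h1 := hulip' n hn t ht R ⟨le_of_lt hδR, le_rfl⟩
    rw [huR, sub_zero] at h1
    rw [abs_sub_comm, abs_of_nonneg (by linarith [ht.2] : 0 ≤ R - t)] at h1
    rw [hc]
    calc |u n t| ≤ R - t := h1
      _ ≤ R - δ := by linarith [ht.1]
  -- THE KEY ESTIMATE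
  have key : ∀ n : ℕ, 2 ≤ n → ∀ r ∈ Icc δ R,
      (1 / Real.sqrt (1 - (v n r) ^ 2) - 1) + (∫ x in (0:ℝ)..(u n r), f r x)
        ≤ B * ((R - δ) / ((n:ℝ) - 1)) * Real.exp (K * (R - δ)) := by
    intro n hn2
    have hn1 : 1 ≤ n := by omega
    obtain ⟨hud, hvcont, hvlt, ⟨w', hw'c, hw'd, hode⟩, hvδ, huR⟩ := hsol n hn1
    have hucont : ContinuousOn (u n) (Icc δ R) := fun x hx => (hud x hx).continuousWithinAt
    have hfucont : ContinuousOn (fun r => f r (u n r)) (Icc δ R) := by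
      have hmaps : MapsTo (fun x : ℝ => (x, u n x)) (Icc δ R) (Icc 0 R ×ˢ Icc (-c') c') := by
        intro x hx
        have h1 := hub' n hn1 x hx
        rw [abs_le] at h1
        exact ⟨hIcc0R hx, ⟨by linarith [h1.1], by linarith [h1.2]⟩⟩
      exact hfK.comp (continuousOn_id.prodMk hucont) hmaps
    have hodeIcc : ∀ r ∈ Icc δ R, w' r = -(r ^ (N - 1) * f r (u n r)) := by
      have hcont : ContinuousOn (fun r => w' r + 1 * r ^ (N - 1) * f r (u n r)) (Icc δ R) := by
        apply hw'c.add
        exact (continuousOn_const.mul (continuous_pow (N - 1)).continuousOn).mul hfucont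
      have hz := eq_zero_on_Icc_of_Ioo hδR hcont hode
      intro r hr
      have h2 := hz r hr
      linear_combination h2
    have hq : ∀ r ∈ Icc δ R, HasDerivWithinAt (fun t => phi1 (v n t))
        (-(f r (u n r)) - ((N : ℝ) - 1) * phi1 (v n r) / r) (Icc δ R) r := by
      intro r hr
      have hr0 : (0:ℝ) < r := lt_of_lt_of_le hδ hr.1
      have hrne : r ≠ 0 := ne_of_gt hr0
      have hrpow : r ^ (N - 1) ≠ 0 := pow_ne_zero _ hrne
      have hdiv := HasDerivWithinAt.div (hw'd r hr)
        ((hasDerivAt_pow (N - 1) r).hasDerivWithinAt) hrpow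
      have h2 : HasDerivWithinAt (fun t => phi1 (v n t))
          ((w' r * r ^ (N - 1) - r ^ (N - 1) * phi1 (v n r) * (((N - 1 : ℕ) : ℝ) * r ^ (N - 1 - 1)))
            / (r ^ (N - 1)) ^ 2) (Icc δ R) r := by
        apply hdiv.congr
        · intro t ht
          have ht0 : t ≠ 0 := ne_of_gt (lt_of_lt_of_le hδ ht.1)
          exact (mul_div_cancel_left₀ _ (pow_ne_zero (N - 1) ht0)).symm
        · exact (mul_div_cancel_left₀ _ hrpow).symm
      have hval : (w' r * r ^ (N - 1) - r ^ (N - 1) * phi1 (v n r) * (((N - 1 : ℕ) : ℝ) * r ^ (N - 1 - 1)))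
            / (r ^ (N - 1)) ^ 2
          = -(f r (u n r)) - ((N : ℝ) - 1) * phi1 (v n r) / r := by
        rw [hodeIcc r hr]
        have e2 : N - 1 - 1 = N - 2 := by omega
        have e1 : N - 1 = (N - 2) + 1 := by omega
        rw [e2, e1]
        have e3 : ((N - 2 + 1 : ℕ) : ℝ) = (N : ℝ) - 1 := by
          rw [show N - 2 + 1 = N - 1 by omega, Nat.cast_sub (by omega : 1 ≤ N)]
          simp
        rw [e3]
        field_simp
        ring
      rw [hval] at h2
      exact h2
    have hkin : ∀ r ∈ Icc δ R, HasDerivWithinAt (fun t => 1 / Real.sqrt (1 - (v n t) ^ 2) - 1)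
        (v n r * (-(f r (u n r)) - ((N : ℝ) - 1) * phi1 (v n r) / r)) (Icc δ R) r := by
      intro r hr
      have h1 := (hasDerivAt_sqrt_one_add_sq (phi1 (v n r))).comp_hasDerivWithinAt r (hq r hr)
      have h2 := h1.sub_const 1
      have h3 : HasDerivWithinAt (fun t => 1 / Real.sqrt (1 - (v n t) ^ 2) - 1)
          (phi1 (v n r) / Real.sqrt (1 + phi1 (v n r) ^ 2) *
            (-(f r (u n r)) - ((N : ℝ) - 1) * phi1 (v n r) / r)) (Icc δ R) r := by
        apply h2.congr
        · intro t ht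
          simp only [Function.comp]
          rw [sqrt_one_add_phi1_sq (hvlt t ht)]
        · simp only [Function.comp]
          rw [sqrt_one_add_phi1_sq (hvlt r hr)]
      rwa [phi1_div_sqrt (hvlt r hr)] at h3
    have hE : ∀ r ∈ Icc δ R, HasDerivWithinAt
        (fun t => 1 / Real.sqrt (1 - (v n t) ^ 2) - 1 + ∫ x in (0:ℝ)..(u n t), f t x)
        (Fr r (u n r) - ((N : ℝ) - 1) / r * (v n r * phi1 (v n r))) (Icc δ R) r := by
      intro r hr
      have hrne : r ≠ 0 := ne_of_gt (lt_of_lt_of_le hδ hr.1)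
      have hcast : ((|u n r| : ℝ) : EReal) < α := hαle _ (le_trans (hub' n hn1 r hr) (le_of_lt hcc'))
      have hFrd := (hA4' (u n r) hcast).1 r hr
      have hFu := hasDerivWithinAt_F_comp (le_of_lt hδ) hcc' hfK hr (hud r hr)
        (hulip' n hn1) (hub' n hn1) hc0 hFrd
      have hsum := (hkin r hr).add hFu
      have hval : v n r * (-(f r (u n r)) - ((N : ℝ) - 1) * phi1 (v n r) / r)
            + (Fr r (u n r) + f r (u n r) * v n r)
          = Fr r (u n r) - ((N : ℝ) - 1) / r * (v n r * phi1 (v n r)) := by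
        field_simp
        ring
      rwa [hval] at hsum
    set E : ℝ → ℝ := fun t => 1 / Real.sqrt (1 - (v n t) ^ 2) - 1 + ∫ x in (0:ℝ)..(u n t), f t x
      with hEdef
    have hE0 : ∀ x ∈ Icc δ R, 0 ≤ E x := fun x hx =>
      add_nonneg (kin_nonneg (hvlt x hx)) (hFnn x hx _ (hub' n hn1 x hx))
    have hEcont : ContinuousOn E (Icc δ R) := fun x hx => (hE x hx).continuousWithinAt
    have hEd : ∀ x ∈ Ioo δ R, HasDerivAt E
        (Fr x (u n x) - ((N : ℝ) - 1) / x * (v n x * phi1 (v n x))) x := fun x hx =>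
      (hE x (Ioo_subset_Icc_self hx)).hasDerivAt (Icc_mem_nhds hx.1 hx.2)
    have hEb : ∀ x ∈ Ioo δ R, |Fr x (u n x) - ((N : ℝ) - 1) / x * (v n x * phi1 (v n x))| ≤ K * E x := by
      intro x hx'
      have hx : x ∈ Icc δ R := Ioo_subset_Icc_self hx'
      have hx0 : 0 < x := lt_of_lt_of_le hδ hx.1
      have hcast : ((|u n x| : ℝ) : EReal) < α := hαle _ (le_trans (hub' n hn1 x hx) (le_of_lt hcc'))
      have hFrb := (hA4' (u n x) hcast).2 x hx
      have hωW : ω x ≤ W := isMaxOn_iff.1 hrWmax x hx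
      have hFnn' := hFnn x hx _ (hub' n hn1 x hx)
      have hkinnn := kin_nonneg (hvlt x hx)
      have hm1 := mul_phi1_nonneg (v n x)
      have hm2 := mul_phi1_le (hvlt x hx)
      have hdivle : ((N : ℝ) - 1) / x ≤ ((N : ℝ) - 1) / δ :=
        div_le_div_of_nonneg_left (by linarith) hδ hx.1
      have hdivnn : 0 ≤ ((N : ℝ) - 1) / x := div_nonneg (by linarith) (le_of_lt hx0)
      have hK2' : (0:ℝ) ≤ ((N : ℝ) - 1) / δ := div_nonneg (by linarith) (le_of_lt hδ)
      have htri : |Fr x (u n x) - ((N : ℝ) - 1) / x * (v n x * phi1 (v n x))|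
          ≤ |Fr x (u n x)| + ((N : ℝ) - 1) / x * (v n x * phi1 (v n x)) := by
        calc |Fr x (u n x) - ((N : ℝ) - 1) / x * (v n x * phi1 (v n x))|
            ≤ |Fr x (u n x)| + |((N : ℝ) - 1) / x * (v n x * phi1 (v n x))| := abs_sub _ _
          _ = |Fr x (u n x)| + ((N : ℝ) - 1) / x * (v n x * phi1 (v n x)) := by
              rw [abs_of_nonneg (mul_nonneg hdivnn hm1)]
      have step : ((N : ℝ) - 1) / x * (v n x * phi1 (v n x))
          ≤ ((N : ℝ) - 1) / δ * (2 * (1 / Real.sqrt (1 - (v n x) ^ 2) - 1)) := by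
        calc ((N : ℝ) - 1) / x * (v n x * phi1 (v n x))
            ≤ ((N : ℝ) - 1) / δ * (v n x * phi1 (v n x)) := mul_le_mul_of_nonneg_right hdivle hm1
          _ ≤ _ := mul_le_mul_of_nonneg_left hm2 hK2'
      have hFrW : |Fr x (u n x)| ≤ W * ∫ x_1 in (0:ℝ)..(u n x), f x x_1 :=
        le_trans hFrb (mul_le_mul_of_nonneg_right hωW hFnn')
      have hEx : E x = (1 / Real.sqrt (1 - (v n x) ^ 2) - 1) + ∫ x_1 in (0:ℝ)..(u n x), f x x_1 := rfl
      rw [hEx, hKdef]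
      have e : (W + 2 * ((N:ℝ) - 1) / δ) *
            ((1 / Real.sqrt (1 - (v n x) ^ 2) - 1) + ∫ x_1 in (0:ℝ)..(u n x), f x x_1)
          = W * (∫ x_1 in (0:ℝ)..(u n x), f x x_1)
            + ((N:ℝ) - 1) / δ * (2 * (1 / Real.sqrt (1 - (v n x) ^ 2) - 1))
            + (W * (1 / Real.sqrt (1 - (v n x) ^ 2) - 1)
              + 2 * ((N:ℝ) - 1) / δ * (∫ x_1 in (0:ℝ)..(u n x), f x x_1)) := by ring
      rw [e]
      linarith [htri, step, hFrW, mul_nonneg hW0 hkinnn, mul_nonneg hK2 hFnn']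
    obtain ⟨Z, hZcard, hZmem, -⟩ := hzeros n hn1
    have hn1R : (0:ℝ) < (n : ℝ) - 1 := by
      have h2 : (2:ℝ) ≤ (n : ℝ) := by exact_mod_cast hn2
      linarith
    have hLpos : 0 < (R - δ) / ((n : ℝ) - 1) := div_pos (by linarith) hn1R
    have hzz : ∃ z z' : ℝ, u n z = 0 ∧ u n z' = 0 ∧ δ < z ∧ z < z' ∧ z' ≤ R ∧
        z' - z < (R - δ) / ((n : ℝ) - 1) := by
      have hRZ : R ∉ Z := fun h => absurd ((hZmem R).1 h).1.2 (lt_irrefl R)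
      have hScard : (insert R Z).card = n := by
        rw [Finset.card_insert_of_notMem hRZ, hZcard]
        omega
      have hSmem : ∀ z ∈ insert R Z, δ < z ∧ z ≤ R ∧ u n z = 0 := by
        intro z hz
        rcases Finset.mem_insert.1 hz with h | h
        · subst h; exact ⟨hδR, le_rfl, huR⟩
        · obtain ⟨hio, hz0⟩ := (hZmem z).1 h
          exact ⟨hio.1, le_of_lt hio.2, hz0⟩
      have hmaps : ∀ z ∈ insert R Z,
          (⌈(z - δ) / ((R - δ) / ((n : ℝ) - 1))⌉ : ℤ) ∈ Finset.Icc (1:ℤ) ((n:ℤ) - 1) := by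
        intro z hz
        obtain ⟨h1, h2, -⟩ := hSmem z hz
        rw [Finset.mem_Icc]
        constructor
        · have h3 := Int.ceil_pos.2 (div_pos (by linarith : (0:ℝ) < z - δ) hLpos)
          omega
        · apply Int.ceil_le.2
          push_cast
          rw [div_le_iff₀ hLpos]
          have hprod : ((n : ℝ) - 1) * ((R - δ) / ((n : ℝ) - 1)) = R - δ := by
            field_simp
          linarith
      have hbins : (Finset.Icc (1:ℤ) ((n:ℤ) - 1)).card < (insert R Z).card := by
        rw [Int.card_Icc, hScard]
        omega
      obtain ⟨z₁, hz₁, z₂, hz₂, hne, hceq⟩ :=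
        Finset.exists_ne_map_eq_of_card_lt_of_maps_to hbins hmaps
      have hgap : ∀ a b : ℝ, a ∈ insert R Z → b ∈ insert R Z →
          (⌈(a - δ) / ((R - δ) / ((n : ℝ) - 1))⌉ : ℤ) = ⌈(b - δ) / ((R - δ) / ((n : ℝ) - 1))⌉ →
          a < b → b - a < (R - δ) / ((n : ℝ) - 1) := by
        intro a b ha hb hab hlt
        have h1 := Int.le_ceil ((b - δ) / ((R - δ) / ((n : ℝ) - 1)))
        have h2 := Int.ceil_lt_add_one ((a - δ) / ((R - δ) / ((n : ℝ) - 1)))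
        rw [← hab] at h1
        have h3 : (b - δ) / ((R - δ) / ((n : ℝ) - 1))
            < (a - δ) / ((R - δ) / ((n : ℝ) - 1)) + 1 := lt_of_le_of_lt h1 h2
        have h4 := mul_lt_mul_of_pos_right h3 hLpos
        rw [div_mul_cancel₀ _ (ne_of_gt hLpos), add_mul,
          div_mul_cancel₀ _ (ne_of_gt hLpos), one_mul] at h4
        linarith
      rcases lt_or_gt_of_ne hne with h | h
      · obtain ⟨ha1, -, ha3⟩ := hSmem z₁ hz₁
        obtain ⟨-, hb2, hb3⟩ := hSmem z₂ hz₂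
        exact ⟨z₁, z₂, ha3, hb3, ha1, h, hb2, hgap _ _ hz₁ hz₂ hceq h⟩
      · obtain ⟨hb1, -, hb3⟩ := hSmem z₂ hz₂
        obtain ⟨-, ha2, ha3⟩ := hSmem z₁ hz₁
        exact ⟨z₂, z₁, hb3, ha3, hb1, h, ha2, hgap _ _ hz₂ hz₁ hceq.symm h⟩
    obtain ⟨z, z', hz0, hz'0, hδz, hzz', hz'R, hgapL⟩ := hzz
    have hIccsub : Icc z z' ⊆ Icc δ R := Icc_subset_Icc (le_of_lt hδz) hz'R
    obtain ⟨τ, hτ, hvτ⟩ := exists_hasDerivAt_eq_zero hzz' (hucont.mono hIccsub)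
      (hz0.trans hz'0.symm)
      (fun x hx => (hud x (hIccsub (Ioo_subset_Icc_self hx))).hasDerivAt
        (Icc_mem_nhds (lt_trans hδz hx.1) (lt_of_lt_of_le hx.2 hz'R)))
    have hτIcc : τ ∈ Icc δ R := hIccsub (Ioo_subset_Icc_self hτ)
    have huτ : |u n τ| ≤ (R - δ) / ((n : ℝ) - 1) := by
      have h1 := hulip' n hn1 τ hτIcc z (hIccsub ⟨le_rfl, le_of_lt hzz'⟩)
      rw [hz0, sub_zero] at h1
      have h2 : |τ - z| = τ - z := abs_of_nonneg (by linarith [hτ.1])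
      rw [h2] at h1
      linarith [hτ.2]
    have hEτ : E τ ≤ B * ((R - δ) / ((n : ℝ) - 1)) := by
      have hkz : (1:ℝ) / Real.sqrt (1 - (v n τ) ^ 2) - 1 = 0 := by
        rw [hvτ]
        simp
      have hFuB : (∫ x in (0:ℝ)..(u n τ), f τ x) ≤ B * |u n τ| := by
        have hbd : ∀ x ∈ Set.uIoc (0:ℝ) (u n τ), ‖f τ x‖ ≤ B := by
          intro x hx
          have hx' : x ∈ uIcc (0:ℝ) (u n τ) := Set.uIoc_subset_uIcc hx
          have hxa := mem_uIcc_abs_sub hx'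
          rw [sub_zero, sub_zero] at hxa
          have hxc : |x| ≤ c' :=
            le_trans hxa (le_trans (hub' n hn1 τ hτIcc) (le_of_lt hcc'))
          rw [Real.norm_eq_abs]
          apply isMaxOn_iff.1 hpBmax (τ, x)
          rw [abs_le] at hxc
          exact ⟨hIcc0R hτIcc, hxc.1, hxc.2⟩
        have hb := intervalIntegral.norm_integral_le_of_norm_le_const hbd
        rw [Real.norm_eq_abs, sub_zero] at hb
        exact le_trans (le_abs_self _) hb
      have hEτval : E τ = (1 / Real.sqrt (1 - (v n τ) ^ 2) - 1) + ∫ x in (0:ℝ)..(u n τ), f τ x := rfl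
      rw [hEτval, hkz, zero_add]
      exact le_trans hFuB (mul_le_mul_of_nonneg_left huτ hB0)
    intro r hr
    have hg := gronwall_two hK0 hEcont hEd hEb hE0 hτIcc r hr
    calc E r ≤ E τ * Real.exp (K * (R - δ)) := hg
      _ ≤ B * ((R - δ) / ((n : ℝ) - 1)) * Real.exp (K * (R - δ)) :=
          mul_le_mul_of_nonneg_right hEτ (le_of_lt (Real.exp_pos _))
  -- MAIN SMALLNESS
  have main : ∀ ε : ℝ, 0 < ε → ∃ n₀ : ℕ, ∀ n, n₀ ≤ n → ∀ r ∈ Icc δ R,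
      |u n r| < ε ∧ |v n r| < ε := by
    intro ε hε
    have hεv0 : 0 < min ε 1 / 2 := by
      have h1 := lt_min hε one_pos
      linarith
    set εv := min ε 1 / 2 with hεv
    have hεv1 : εv < 1 := by
      have h1 := min_le_right ε 1
      rw [hεv]; linarith
    have hεvε : εv ≤ ε := by
      have h1 := min_le_left ε 1
      rw [hεv]; linarith
    have hεvabs : |εv| < 1 := by rw [abs_of_pos hεv0]; exact hεv1
    set κ := 1 / Real.sqrt (1 - εv ^ 2) - 1 with hκ
    have hκ0 : 0 < κ := by
      have h1 := sqrt1_pos hεvabs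
      have h2 : Real.sqrt (1 - εv ^ 2) < 1 := (Real.sqrt_lt' one_pos).2 (by nlinarith)
      rw [hκ]
      have h3 : 1 < 1 / Real.sqrt (1 - εv ^ 2) := by
        rw [lt_div_iff₀ h1]; linarith
      linarith
    have hεu0 : 0 < min ε (R - δ) / 2 := by
      have h1 := lt_min hε (by linarith : (0:ℝ) < R - δ)
      linarith
    set εu := min ε (R - δ) / 2 with hεu
    have hεuc : εu ≤ c := by
      have h1 := min_le_right ε (R - δ)
      rw [hεu, hc]; linarith
    have hεuε : εu ≤ ε := by
      have h1 := min_le_left ε (R - δ)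
      rw [hεu]; linarith
    have hsubP : Icc δ R ×ˢ Icc (εu/2) εu ⊆ Icc 0 R ×ˢ Icc (-c') c' := by
      rintro ⟨p1, p2⟩ ⟨h1, h2⟩
      exact ⟨hIcc0R h1, ⟨by simp only [mem_Icc] at h2 ⊢; linarith [h2.1], by
        simp only [mem_Icc] at h2 ⊢; linarith [h2.2]⟩⟩
    obtain ⟨pP, hpP, hpPmin⟩ := ((isCompact_Icc.prod isCompact_Icc :
        IsCompact (Icc δ R ×ˢ Icc (εu/2) εu))).exists_isMinOn
      ⟨(δ, εu/2), ⟨⟨le_rfl, le_of_lt hδR⟩, ⟨le_rfl, by linarith⟩⟩⟩ (hfK.mono hsubP)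
    have hμp : 0 < f pP.1 pP.2 :=
      hfpos' pP.1 hpP.1 pP.2 (by linarith [hpP.2.1]) (by linarith [hpP.2.2])
    have hsubM : Icc δ R ×ˢ Icc (-εu) (-(εu/2)) ⊆ Icc 0 R ×ˢ Icc (-c') c' := by
      rintro ⟨p1, p2⟩ ⟨h1, h2⟩
      exact ⟨hIcc0R h1, ⟨by simp only [mem_Icc] at h2 ⊢; linarith [h2.1], by
        simp only [mem_Icc] at h2 ⊢; linarith [h2.2]⟩⟩
    obtain ⟨pM, hpM, hpMmax⟩ := ((isCompact_Icc.prod isCompact_Icc :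
        IsCompact (Icc δ R ×ˢ Icc (-εu) (-(εu/2))))).exists_isMaxOn
      ⟨(δ, -εu), ⟨⟨le_rfl, le_of_lt hδR⟩, ⟨le_rfl, by linarith⟩⟩⟩ (hfK.mono hsubM)
    have hμm : f pM.1 pM.2 < 0 :=
      hfneg' pM.1 hpM.1 pM.2 (by linarith [hpM.2.2]) (by linarith [hpM.2.1])
    set μ := min (f pP.1 pP.2) (-(f pM.1 pM.2)) with hμ
    have hμ0 : 0 < μ := lt_min hμp (by linarith)
    set m := μ * (εu/2) with hm
    have hm0 : 0 < m := mul_pos hμ0 (by linarith)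
    have hmemI : ∀ y : ℝ, |y| ≤ c → y ∈ Icc (-c') c' := by
      intro y hy; rw [abs_le] at hy
      exact ⟨by linarith [hy.1], by linarith [hy.2]⟩
    have h0I : (0:ℝ) ∈ Icc (-c') c' := hmemI 0 (by rw [abs_zero]; exact hc0)
    have hεuI : εu ∈ Icc (-c') c' := hmemI εu (by rw [abs_of_pos hεu0]; exact hεuc)
    have hεu2I : εu/2 ∈ Icc (-c') c' := hmemI (εu/2) (by rw [abs_of_pos (by linarith)]; linarith)
    have hnεuI : -εu ∈ Icc (-c') c' := by
      simp only [mem_Icc] at hεuI ⊢; constructor <;> linarith [hεuI.1, hεuI.2]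
    have hnεu2I : -(εu/2) ∈ Icc (-c') c' := by
      simp only [mem_Icc] at hεu2I ⊢; constructor <;> linarith [hεu2I.1, hεu2I.2]
    have hFlow : ∀ r ∈ Icc δ R, ∀ s : ℝ, |s| ≤ c → εu ≤ |s| → m ≤ ∫ x in (0:ℝ)..s, f r x := by
      intro r hr s hsc hεus
      have hsI : s ∈ Icc (-c') c' := hmemI s hsc
      have hsc2 := abs_le.1 hsc
      rcases le_total 0 s with h | h
      · have hs : εu ≤ s := by rwa [abs_of_nonneg h] at hεus
        have e1 := intervalIntegral.integral_add_adjacent_intervals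
          (hint r hr _ hεu2I _ hεuI) (hint r hr _ hεuI _ hsI)
        have e2 := intervalIntegral.integral_add_adjacent_intervals
          (hint r hr _ h0I _ hεu2I) ((hint r hr _ hεu2I _ hεuI).trans (hint r hr _ hεuI _ hsI))
        have t1 : 0 ≤ ∫ x in (0:ℝ)..(εu/2), f r x := by
          apply intervalIntegral.integral_nonneg (by linarith)
          intro x hx
          exact hfnn r hr x hx.1 (by linarith [hx.2, hcc'])
        have t3 : 0 ≤ ∫ x in εu..s, f r x := by
          apply intervalIntegral.integral_nonneg hs
          intro x hx
          exact hfnn r hr x (by linarith [hx.1]) (by linarith [hx.2, hsc2.2, hcc'])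
        have hmono : ∀ x ∈ Icc (εu/2) εu, μ ≤ f r x := fun x hx =>
          le_trans (min_le_left _ _) (isMinOn_iff.1 hpPmin (r, x) ⟨hr, hx⟩)
        have hconst := intervalIntegral.integral_mono_on (by linarith : εu/2 ≤ εu)
          intervalIntegrable_const (hint r hr _ hεu2I _ hεuI) hmono
        rw [intervalIntegral.integral_const, smul_eq_mul] at hconst
        have t2 : m ≤ ∫ x in (εu/2)..εu, f r x := by
          rw [hm]
          calc μ * (εu/2) = (εu - εu/2) * μ := by ring
            _ ≤ _ := hconst
        rw [← e2, ← e1]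
        linarith
      · have hs : s ≤ -εu := by
          rw [abs_of_nonpos h] at hεus; linarith
        have e1 := intervalIntegral.integral_add_adjacent_intervals
          (hint r hr _ hsI _ hnεuI) (hint r hr _ hnεuI _ hnεu2I)
        have e2 := intervalIntegral.integral_add_adjacent_intervals
          ((hint r hr _ hsI _ hnεuI).trans (hint r hr _ hnεuI _ hnεu2I)) (hint r hr _ hnεu2I _ h0I)
        have t1 : (∫ x in s..(-εu), f r x) ≤ 0 := by
          have h1 : 0 ≤ ∫ x in s..(-εu), -(f r x) := by
            apply intervalIntegral.integral_nonneg hs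
            intro x hx
            simp only [neg_nonneg]
            exact hfnp r hr x (by linarith [hx.2, hεu0]) (by linarith [hx.1, hsc2.1, hcc'])
          rw [intervalIntegral.integral_neg] at h1
          linarith
        have t3 : (∫ x in (-(εu/2))..(0:ℝ), f r x) ≤ 0 := by
          have h1 : 0 ≤ ∫ x in (-(εu/2))..(0:ℝ), -(f r x) := by
            apply intervalIntegral.integral_nonneg (by linarith)
            intro x hx
            simp only [neg_nonneg]
            exact hfnp r hr x hx.2 (by linarith [hx.1, hεuc, hcc'])
          rw [intervalIntegral.integral_neg] at h1
          linarith
        have hmono : ∀ x ∈ Icc (-εu) (-(εu/2)), f r x ≤ -μ := by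
          intro x hx
          have h1 := isMaxOn_iff.1 hpMmax (r, x) ⟨hr, hx⟩
          have h2 := min_le_right (f pP.1 pP.2) (-(f pM.1 pM.2))
          rw [← hμ] at h2
          linarith
        have hconst := intervalIntegral.integral_mono_on (by linarith : -εu ≤ -(εu/2))
          (hint r hr _ hnεuI _ hnεu2I) intervalIntegrable_const hmono
        rw [intervalIntegral.integral_const, smul_eq_mul] at hconst
        have t2 : (∫ x in (-εu)..(-(εu/2)), f r x) ≤ -m := by
          rw [hm]
          calc (∫ x in (-εu)..(-(εu/2)), f r x) ≤ (-(εu/2) - -εu) * -μ := hconst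
            _ = -(μ * (εu/2)) := by ring
        rw [intervalIntegral.integral_symm s 0, ← e2, ← e1]
        linarith
    obtain ⟨M, hM⟩ := exists_nat_gt ((B + 1) * Real.exp (K * (R - δ)) * (R - δ) / min κ m)
    refine ⟨M + 2, fun n hn r hr => ?_⟩
    have hn2 : 2 ≤ n := by omega
    have hn1 : 1 ≤ n := by omega
    have hkey := key n hn2 r hr
    have hminpos : 0 < min κ m := lt_min hκ0 hm0
    have hn1R : (0:ℝ) < (n : ℝ) - 1 := by
      have h2 : (2:ℝ) ≤ (n : ℝ) := by exact_mod_cast hn2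
      linarith
    have hMn : (M : ℝ) ≤ (n : ℝ) - 1 := by
      have h2 : ((M:ℝ) + 2) ≤ (n : ℝ) := by exact_mod_cast hn
      linarith
    have hBL : B * ((R - δ) / ((n : ℝ) - 1)) * Real.exp (K * (R - δ)) < min κ m := by
      rw [div_lt_iff₀ hminpos] at hM
      have hexp := Real.exp_pos (K * (R - δ))
      have h2 : (B + 1) * Real.exp (K * (R - δ)) * (R - δ) < ((n : ℝ) - 1) * min κ m := by
        calc (B + 1) * Real.exp (K * (R - δ)) * (R - δ) < (M : ℝ) * min κ m := hM
          _ ≤ ((n : ℝ) - 1) * min κ m := mul_le_mul_of_nonneg_right hMn (le_of_lt hminpos)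
      have h3 : B * ((R - δ) / ((n : ℝ) - 1)) * Real.exp (K * (R - δ))
          = B * Real.exp (K * (R - δ)) * (R - δ) / ((n : ℝ) - 1) := by ring
      rw [h3, div_lt_iff₀ hn1R]
      nlinarith [mul_pos hexp (show (0:ℝ) < R - δ by linarith)]
    have hEr : (1 / Real.sqrt (1 - (v n r) ^ 2) - 1) + (∫ x in (0:ℝ)..(u n r), f r x)
        < min κ m := lt_of_le_of_lt hkey hBL
    have hFnn' := hFnn r hr (u n r) (hub' n hn1 r hr)
    have hkinnn := kin_nonneg (hvlt' n hn1 r hr)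
    constructor
    · by_contra hcon
      push_neg at hcon
      have h1 : εu ≤ |u n r| := le_trans hεuε hcon
      have h2 := hFlow r hr (u n r) (hub' n hn1 r hr) h1
      have h3 : (∫ x in (0:ℝ)..(u n r), f r x) < m := by
        have h4 := lt_of_lt_of_le hEr (min_le_right κ m)
        linarith
      linarith
    · have h1 : (1 / Real.sqrt (1 - (v n r) ^ 2) - 1) < κ := by
        have h4 := lt_of_lt_of_le hEr (min_le_left κ m)
        linarith
      rw [hκ] at h1
      exact lt_of_lt_of_le (kin_lt (hvlt' n hn1 r hr) hεv0 hεv1 h1) hεvε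
  constructor
  · intro ε hε
    obtain ⟨n₀, h⟩ := main ε hε
    exact ⟨n₀, fun n hn r hr => (h n hn r hr).1⟩
  · intro ε hε
    obtain ⟨n₀, h⟩ := main ε hε
    exact ⟨n₀, fun n hn r hr => (h n hn r hr).2⟩
end
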